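/- arXiv:1205.4382 — 4 statements merged into one kernel-verified Lean document; each statement's English description precedes it below -/
import Mathlib

section
/- For every integer k ≥ 2 there exists a finite simple connected graph G = (V,E) which is regular of degree 5, has |V| = 6k vertices, and whose generic rank satisfies r(G) = 10k. In particular, for this class of graphs r(G) = (5/3)·|V|, so the order of the lower bound r(G) ≥ (5/3)·|V| − 1 for 5-regular connected graphs is sharp. -/
noncomputable section

open Classical in
/-- The edge vector of the pair `(i, j)` under the realization `p`: the function `V → ℝ × ℝ`
whose value is `p i - p j` at `i`, `p j - p i` at `j`, and `0` elsewhere. -/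
def edgeVec {V : Type*} (p : V → ℝ × ℝ) (i j : V) : V → ℝ × ℝ :=
  fun v => if v = i then p i - p j else if v = j then p j - p i else 0

/-- The set of edge vectors of a set `F` of (potential) edges under the realization `p`. -/
def edgeVecs {V : Type*} (p : V → ℝ × ℝ) (F : Set (Sym2 V)) : Set (V → ℝ × ℝ) :=
  {x | ∃ i j, s(i, j) ∈ F ∧ x = edgeVec p i j}

/-- The rank of the edge vectors of `F` under the realization `p`. -/
def rankOf {V : Type*} (p : V → ℝ × ℝ) (F : Set (Sym2 V)) : ℕ :=
  Module.finrank ℝ (Submodule.span ℝ (edgeVecs p F))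

/-- The generic rank of a set of edges: the maximum over all realizations `p` of the rank. -/
def genRankSet {V : Type*} (F : Set (Sym2 V)) : ℕ :=
  ⨆ p : V → ℝ × ℝ, rankOf p F

/-- The generic rank `r(G)` of a graph. -/
def genRank {V : Type*} (G : SimpleGraph V) : ℕ := genRankSet G.edgeSet

/-- The stress number `s_p(F)` of a set of edges under the realization `p`
(the dimension of the space of resolvable stresses). -/
def stressNum {V : Type*} (p : V → ℝ × ℝ) (F : Set (Sym2 V)) : ℕ :=
  F.ncard - rankOf p F

/-- The generic stress number `s(F)` of a set of edges. -/
def genStressSet {V : Type*} (F : Set (Sym2 V)) : ℕ := F.ncard - genRankSet F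

/-- The generic stress number `s(G)` of a graph. -/
def genStress {V : Type*} (G : SimpleGraph V) : ℕ := G.edgeSet.ncard - genRank G

/-- A planar configuration is in general position if it is injective and no three distinct
vertices have collinear images. -/
def GeneralPosition {V : Type*} (p : V → ℝ × ℝ) : Prop :=
  Function.Injective p ∧
    ∀ i j k : V, i ≠ j → j ≠ k → i ≠ k →
      ¬ Collinear ℝ ({p i, p j, p k} : Set (ℝ × ℝ))

/-- `W_U`: the subspace of functions `V → ℝ × ℝ` vanishing at every vertex outside `U`. -/
def vanishOn {V : Type*} (U : Set V) : Submodule ℝ (V → ℝ × ℝ) where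
  carrier := {f | ∀ v ∉ U, f v = 0}
  zero_mem' := fun v _ => rfl
  add_mem' := by
    intro a b ha hb v hv
    simp [Pi.add_apply, ha v hv, hb v hv]
  smul_mem' := by
    intro c f hf v hv
    simp [Pi.smul_apply, hf v hv]

end


set_option linter.unusedSectionVars false
namespace Sharp5
variable {k : ℕ}
def blk (v : Fin (6*k)) : Fin k := ⟨v.val / 6, by have := v.isLt; omega⟩
def slot (v : Fin (6*k)) : Fin 6 := ⟨v.val % 6, by omega⟩
def enc (i : Fin k) (t : Fin 6) : Fin (6*k) := ⟨6*i.val + t.val, by have := i.isLt; have := t.isLt; omega⟩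
@[simp] lemma blk_enc (i : Fin k) (t : Fin 6) : blk (enc i t) = i := by
  apply Fin.ext; have := t.isLt; simp [blk, enc]; omega
@[simp] lemma slot_enc (i : Fin k) (t : Fin 6) : slot (enc i t) = t := by
  apply Fin.ext; have := t.isLt; simp [slot, enc]
@[simp] lemma enc_eq_enc {i j : Fin k} {s t : Fin 6} : enc i s = enc j t ↔ i = j ∧ s = t := by
  constructor
  · intro h
    have hv := congrArg Fin.val h
    simp [enc] at hv
    have := s.isLt; have := t.isLt
    constructor <;> apply Fin.ext <;> omega
  · rintro ⟨rfl, rfl⟩; rfl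
lemma enc_blk_slot (v : Fin (6*k)) : enc (blk v) (slot v) = v := by
  apply Fin.ext; simp [enc, blk, slot]; omega
variable [NeZero k]
def G (k : ℕ) [NeZero k] : SimpleGraph (Fin (6*k)) where
  Adj u v := u ≠ v ∧ ((blk u = blk v ∧ ¬(slot u = 2 ∧ slot v = 3) ∧ ¬(slot u = 3 ∧ slot v = 2)) ∨
    (blk v = blk u + 1 ∧ slot u = 3 ∧ slot v = 2) ∨ (blk u = blk v + 1 ∧ slot v = 3 ∧ slot u = 2))
  symm := by
    constructor
    rintro u v ⟨h1, h2 | h3 | h4⟩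
    · exact ⟨h1.symm, Or.inl ⟨h2.1.symm, fun ⟨a,b⟩ => h2.2.2 ⟨b,a⟩, fun ⟨a,b⟩ => h2.2.1 ⟨b,a⟩⟩⟩
    · exact ⟨h1.symm, Or.inr (Or.inr ⟨h3.1, h3.2.1, h3.2.2⟩)⟩
    · exact ⟨h1.symm, Or.inr (Or.inl ⟨h4.1, h4.2.1, h4.2.2⟩)⟩
  loopless := ⟨by rintro v ⟨h, -⟩; exact h rfl⟩
lemma adj_block {i : Fin k} {s t : Fin 6} (hst : s ≠ t) (h1 : ¬(s = 2 ∧ t = 3))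
    (h2 : ¬(s = 3 ∧ t = 2)) : (G k).Adj (enc i s) (enc i t) := by
  refine ⟨by simp [hst], Or.inl ?_⟩
  simp [hst, h1, h2]
lemma adj_conn (i : Fin k) : (G k).Adj (enc i 3) (enc (i+1) 2) := by
  refine ⟨by simp, Or.inr (Or.inl ?_)⟩
  simp

lemma eq_enc_iff {w : Fin (6*k)} {i : Fin k} {t : Fin 6} : w = enc i t ↔ blk w = i ∧ slot w = t := by
  constructor
  · rintro rfl; simp
  · rintro ⟨h1, h2⟩; rw [← h1, ← h2, enc_blk_slot]

lemma card5 {α : Type*} {a b c d e : α} (h1 : a ≠ b) (h2 : a ≠ c) (h3 : a ≠ d) (h4 : a ≠ e)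
    (h5 : b ≠ c) (h6 : b ≠ d) (h7 : b ≠ e) (h8 : c ≠ d) (h9 : c ≠ e) (h10 : d ≠ e) :
    Nat.card ({a, b, c, d, e} : Set α) = 5 := by
  rw [Nat.card_coe_set_eq]
  rw [Set.ncard_insert_of_notMem (by simp [h1, h2, h3, h4]) (Set.toFinite _),
      Set.ncard_insert_of_notMem (by simp [h5, h6, h7]) (Set.toFinite _),
      Set.ncard_insert_of_notMem (by simp [h8, h9]) (Set.toFinite _),
      Set.ncard_insert_of_notMem (by simp [h10]) (Set.toFinite _),
      Set.ncard_singleton]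

lemma sub_one_add_one (i : Fin k) : (i - 1) + 1 = i := by exact sub_add_cancel i 1

lemma hforward {i : Fin k} (u : Fin 6) (w : Fin (6*k)) (h : (G k).Adj (enc i u) w) :
    (blk w = i ∧ slot w ≠ u ∧ ¬(u = 2 ∧ slot w = 3) ∧ ¬(u = 3 ∧ slot w = 2)) ∨
      (u = 3 ∧ w = enc (i+1) 2) ∨ (u = 2 ∧ w = enc (i-1) 3) := by
  obtain ⟨hne, hb | hc1 | hc2⟩ := h
  · left
    simp only [blk_enc, slot_enc] at hb
    refine ⟨hb.1.symm, ?_, hb.2.1, hb.2.2⟩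
    intro hsl
    exact hne ((eq_enc_iff).mpr ⟨hb.1.symm, hsl⟩).symm
  · right; left
    simp only [blk_enc, slot_enc] at hc1
    exact ⟨hc1.2.1, by rw [eq_enc_iff]; exact ⟨hc1.1, hc1.2.2⟩⟩
  · right; right
    simp only [blk_enc, slot_enc] at hc2
    exact ⟨hc2.2.2, by rw [eq_enc_iff]; exact ⟨eq_sub_of_add_eq hc2.1.symm, hc2.2.1⟩⟩

lemma degree5 (hk : 2 ≤ k) (v : Fin (6*k)) : Nat.card ((G k).neighborSet v) = 5 := by
  obtain ⟨i, t, rfl⟩ : ∃ i t, v = enc i t := ⟨blk v, slot v, (enc_blk_slot v).symm⟩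
  have hvone : ((1:Fin k)).val = 1 := by rw [Fin.val_one', Nat.mod_eq_of_lt (by omega)]
  have hne1 : ∀ j j' : Fin k, j' = j + 1 → j ≠ j' := by
    rintro j j' rfl h
    have h1 : (1 : Fin k) = 0 := by
      have := add_left_cancel (a := j) (b := (1:Fin k)) (c := 0) (by simpa using h.symm)
      simpa using this
    rw [h1] at hvone; simp at hvone
  have hcases : ∀ t : Fin 6, t = 0 ∨ t = 1 ∨ t = 2 ∨ t = 3 ∨ t = 4 ∨ t = 5 := by decide
  rcases hcases t with rfl|rfl|rfl|rfl|rfl|rfl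
  · -- t = 0
    have hset : (G k).neighborSet (enc i 0) =
        ({enc i 1, enc i 2, enc i 3, enc i 4, enc i 5} : Set _) := by
      ext w
      simp only [SimpleGraph.mem_neighborSet, Set.mem_insert_iff, Set.mem_singleton_iff]
      constructor
      · intro h
        rcases hforward 0 w h with ⟨hb, hs, -, -⟩ | ⟨hc, -⟩ | ⟨hc, -⟩
        · simp only [eq_enc_iff, hb, true_and]
          have hdec : ∀ s : Fin 6, s ≠ 0 → (s = 1 ∨ s = 2 ∨ s = 3 ∨ s = 4 ∨ s = 5) := by decide
          rcases hdec (slot w) hs with h'|h'|h'|h'|h' <;> simp [h']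
        · exact absurd hc (by decide)
        · exact absurd hc (by decide)
      · rintro (rfl|rfl|rfl|rfl|rfl) <;> exact adj_block (by decide) (by decide) (by decide)
    rw [hset]
    exact card5 (by simp) (by simp) (by simp) (by simp) (by simp) (by simp) (by simp)
      (by simp) (by simp) (by simp)
  · -- t = 1
    have hset : (G k).neighborSet (enc i 1) =
        ({enc i 0, enc i 2, enc i 3, enc i 4, enc i 5} : Set _) := by
      ext w
      simp only [SimpleGraph.mem_neighborSet, Set.mem_insert_iff, Set.mem_singleton_iff]
      constructor
      · intro h
        rcases hforward 1 w h with ⟨hb, hs, -, -⟩ | ⟨hc, -⟩ | ⟨hc, -⟩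
        · simp only [eq_enc_iff, hb, true_and]
          have hdec : ∀ s : Fin 6, s ≠ 1 → (s = 0 ∨ s = 2 ∨ s = 3 ∨ s = 4 ∨ s = 5) := by decide
          rcases hdec (slot w) hs with h'|h'|h'|h'|h' <;> simp [h']
        · exact absurd hc (by decide)
        · exact absurd hc (by decide)
      · rintro (rfl|rfl|rfl|rfl|rfl) <;> exact adj_block (by decide) (by decide) (by decide)
    rw [hset]
    exact card5 (by simp) (by simp) (by simp) (by simp) (by simp) (by simp) (by simp)
      (by simp) (by simp) (by simp)
  · -- t = 2
    have hset : (G k).neighborSet (enc i 2) =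
        ({enc i 0, enc i 1, enc i 4, enc i 5, enc (i-1) 3} : Set _) := by
      ext w
      simp only [SimpleGraph.mem_neighborSet, Set.mem_insert_iff, Set.mem_singleton_iff]
      constructor
      · intro h
        rcases hforward 2 w h with ⟨hb, hs, h23, -⟩ | ⟨hc, -⟩ | ⟨-, rfl⟩
        · have hs3 : slot w ≠ 3 := fun hh => h23 ⟨rfl, hh⟩
          simp only [eq_enc_iff, hb, true_and]
          have : ∀ s : Fin 6, s ≠ 2 → s ≠ 3 → (s = 0 ∨ s = 1 ∨ s = 4 ∨ s = 5) := by decide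
          rcases this (slot w) hs hs3 with h'|h'|h'|h' <;> simp [h']
        · exact absurd hc (by decide)
        · simp
      · rintro (rfl|rfl|rfl|rfl|rfl)
        · exact adj_block (by decide) (by decide) (by decide)
        · exact adj_block (by decide) (by decide) (by decide)
        · exact adj_block (by decide) (by decide) (by decide)
        · exact adj_block (by decide) (by decide) (by decide)
        · have := (adj_conn (k := k) (i-1)).symm
          rwa [sub_one_add_one] at this
    rw [hset]
    have hne' : enc (i-1) 3 ≠ enc i 0 ∧ enc (i-1) 3 ≠ enc i 1 ∧ enc (i-1) 3 ≠ enc i 4 ∧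
        (enc (i-1) 3 : Fin (6*k)) ≠ enc i 5 := by
      refine ⟨?_,?_,?_,?_⟩ <;> simp
    exact card5 (by simp) (by simp) (by simp) hne'.1.symm (by simp) (by simp) hne'.2.1.symm
      (by simp) hne'.2.2.1.symm hne'.2.2.2.symm
  · -- t = 3
    have hset : (G k).neighborSet (enc i 3) =
        ({enc i 0, enc i 1, enc i 4, enc i 5, enc (i+1) 2} : Set _) := by
      ext w
      simp only [SimpleGraph.mem_neighborSet, Set.mem_insert_iff, Set.mem_singleton_iff]
      constructor
      · intro h
        rcases hforward 3 w h with ⟨hb, hs, -, h32⟩ | ⟨-, rfl⟩ | ⟨hc, -⟩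
        · have hs2 : slot w ≠ 2 := fun hh => h32 ⟨rfl, hh⟩
          simp only [eq_enc_iff, hb, true_and]
          have : ∀ s : Fin 6, s ≠ 3 → s ≠ 2 → (s = 0 ∨ s = 1 ∨ s = 4 ∨ s = 5) := by decide
          rcases this (slot w) hs hs2 with h'|h'|h'|h' <;> simp [h']
        · simp
        · exact absurd hc (by decide)
      · rintro (rfl|rfl|rfl|rfl|rfl)
        · exact adj_block (by decide) (by decide) (by decide)
        · exact adj_block (by decide) (by decide) (by decide)
        · exact adj_block (by decide) (by decide) (by decide)
        · exact adj_block (by decide) (by decide) (by decide)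
        · exact adj_conn i
    rw [hset]
    exact card5 (by simp) (by simp) (by simp) (by simp) (by simp) (by simp) (by simp)
      (by simp) (by simp) (by simp)
  · -- t = 4
    have hset : (G k).neighborSet (enc i 4) =
        ({enc i 0, enc i 1, enc i 2, enc i 3, enc i 5} : Set _) := by
      ext w
      simp only [SimpleGraph.mem_neighborSet, Set.mem_insert_iff, Set.mem_singleton_iff]
      constructor
      · intro h
        rcases hforward 4 w h with ⟨hb, hs, -, -⟩ | ⟨hc, -⟩ | ⟨hc, -⟩
        · simp only [eq_enc_iff, hb, true_and]
          have hdec : ∀ s : Fin 6, s ≠ 4 → (s = 0 ∨ s = 1 ∨ s = 2 ∨ s = 3 ∨ s = 5) := by decide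
          rcases hdec (slot w) hs with h'|h'|h'|h'|h' <;> simp [h']
        · exact absurd hc (by decide)
        · exact absurd hc (by decide)
      · rintro (rfl|rfl|rfl|rfl|rfl) <;> exact adj_block (by decide) (by decide) (by decide)
    rw [hset]
    exact card5 (by simp) (by simp) (by simp) (by simp) (by simp) (by simp) (by simp)
      (by simp) (by simp) (by simp)
  · -- t = 5
    have hset : (G k).neighborSet (enc i 5) =
        ({enc i 0, enc i 1, enc i 2, enc i 3, enc i 4} : Set _) := by
      ext w
      simp only [SimpleGraph.mem_neighborSet, Set.mem_insert_iff, Set.mem_singleton_iff]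
      constructor
      · intro h
        rcases hforward 5 w h with ⟨hb, hs, -, -⟩ | ⟨hc, -⟩ | ⟨hc, -⟩
        · simp only [eq_enc_iff, hb, true_and]
          have hdec : ∀ s : Fin 6, s ≠ 5 → (s = 0 ∨ s = 1 ∨ s = 2 ∨ s = 3 ∨ s = 4) := by decide
          rcases hdec (slot w) hs with h'|h'|h'|h'|h' <;> simp [h']
        · exact absurd hc (by decide)
        · exact absurd hc (by decide)
      · rintro (rfl|rfl|rfl|rfl|rfl) <;> exact adj_block (by decide) (by decide) (by decide)
    rw [hset]
    exact card5 (by simp) (by simp) (by simp) (by simp) (by simp) (by simp) (by simp)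
      (by simp) (by simp) (by simp)

lemma connected (hk : 2 ≤ k) : (G k).Connected := by
  have h0 : (0:ℕ) < 6*k := by omega
  rw [SimpleGraph.connected_iff]
  refine ⟨?_, ⟨⟨0, h0⟩⟩⟩
  -- each vertex reaches enc (blk v) 0
  have hblk0 : ∀ v : Fin (6*k), (G k).Reachable v (enc (blk v) 0) := by
    intro v
    by_cases h : slot v = 0
    · have hv : v = enc (blk v) 0 := by rw [← h, enc_blk_slot]
      rw [← hv]
    · have : (G k).Adj v (enc (blk v) 0) := by
        nth_rewrite 1 [← enc_blk_slot v]
        exact adj_block h (by rintro ⟨-, h2⟩; exact absurd h2 (by decide))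
          (by rintro ⟨-, h2⟩; exact absurd h2 (by decide))
      exact this.reachable
  -- block 0 reachability by induction on val
  have hstep : ∀ i : Fin k, (G k).Reachable (enc (i+1) 0) (enc i 0) := by
    intro i
    have r1 : (G k).Adj (enc (i+1) 0) (enc (i+1) 2) := adj_block (by decide) (by decide) (by decide)
    have r2 : (G k).Adj (enc i 3) (enc (i+1) 2) := adj_conn i
    have r3 : (G k).Adj (enc i 3) (enc i 0) := adj_block (by decide) (by decide) (by decide)
    exact r1.reachable.trans (r2.reachable.symm.trans r3.reachable)
  have hind : ∀ n : ℕ, ∀ hn : n < k, (G k).Reachable (enc ⟨n, hn⟩ 0) (enc ⟨0, by omega⟩ 0) := by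
    intro n
    induction n with
    | zero => intro hn; rfl
    | succ m ih =>
      intro hn
      have hm : m < k := by omega
      have : (⟨m+1, hn⟩ : Fin k) = ⟨m, hm⟩ + 1 := by
        apply Fin.ext
        simp [Fin.val_add, Fin.val_one', Nat.mod_eq_of_lt (show 1 < k by omega), Nat.mod_eq_of_lt hn]
      rw [this]
      exact (hstep ⟨m, hm⟩).trans (ih hm)
  intro u v
  have hu := (hblk0 u).trans (hind (blk u).val (blk u).isLt)
  have hv := (hblk0 v).trans (hind (blk v).val (blk v).isLt)
  exact hu.trans hv.symm
end Sharp5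

set_option linter.unusedSectionVars false
noncomputable section
namespace Sharp5
variable {k : ℕ}

def pt (k : ℕ) : Fin (6*k) → ℝ × ℝ :=
  fun v => (((slot v).val : ℝ), ((slot v).val : ℝ)^2 + ((blk v).val : ℝ))

@[simp] lemma pt_enc (i : Fin k) (t : Fin 6) :
    pt k (enc i t) = ((t.val : ℝ), (t.val : ℝ)^2 + (i.val : ℝ)) := by
  simp [pt]

def cross (x y : ℝ × ℝ) : ℝ := x.1 * y.2 - x.2 * y.1

@[simp] lemma cross_zero_left (y : ℝ × ℝ) : cross 0 y = 0 := by simp [cross]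
@[simp] lemma cross_zero_right (x : ℝ × ℝ) : cross x 0 = 0 := by simp [cross]

def single (a : Fin (6*k)) (z : ℝ × ℝ) : Fin (6*k) → ℝ × ℝ := fun v => if v = a then z else 0

lemma edgeVec_decomp {a b : Fin (6*k)} (hab : a ≠ b) (p : Fin (6*k) → ℝ × ℝ) :
    edgeVec p a b = single a (p a - p b) + single b (p b - p a) := by
  funext v
  by_cases h1 : v = a <;> by_cases h2 : v = b <;>
    simp_all [edgeVec, single]

lemma edgeVec_comm (p : Fin (6*k) → ℝ × ℝ) (a b : Fin (6*k)) :
    edgeVec p a b = edgeVec p b a := by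
  funext v
  by_cases h1 : v = a <;> by_cases h2 : v = b <;>
    simp_all [edgeVec]

@[simp] lemma edgeVec_self (p : Fin (6*k) → ℝ × ℝ) (a : Fin (6*k)) :
    edgeVec p a a = 0 := by
  funext v; by_cases h : v = a <;> simp [edgeVec, h]

def psi (k : ℕ) (p : Fin (6*k) → ℝ × ℝ) (i : Fin k) (c : ℝ × ℝ) :
    (Fin (6*k) → ℝ × ℝ) →ₗ[ℝ] ℝ where
  toFun f := ∑ t : Fin 6, cross (f (enc i t)) (p (enc i t) - c)
  map_add' f g := by
    rw [← Finset.sum_add_distrib]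
    refine Finset.sum_congr rfl fun t _ => ?_
    simp only [Pi.add_apply, cross, Prod.fst_add, Prod.snd_add]
    ring
  map_smul' r f := by
    rw [RingHom.id_apply, smul_eq_mul, Finset.mul_sum]
    refine Finset.sum_congr rfl fun t _ => ?_
    simp only [Pi.smul_apply, cross, Prod.smul_fst, Prod.smul_snd, smul_eq_mul]
    ring

lemma psi_single_in (p : Fin (6*k) → ℝ × ℝ) (i : Fin k) (c : ℝ × ℝ) (s : Fin 6) (z : ℝ × ℝ) :
    psi k p i c (single (enc i s) z) = cross z (p (enc i s) - c) := by
  show (∑ t : Fin 6, cross (single (enc i s) z (enc i t)) (p (enc i t) - c)) = _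
  rw [show (fun t => cross (single (enc i s) z (enc i t)) (p (enc i t) - c)) =
      (fun t => if t = s then cross z (p (enc i t) - c) else 0) from ?_]
  · rw [Finset.sum_ite_eq' Finset.univ s (fun t => cross z (p (enc i t) - c))]
    simp
  · funext t
    by_cases h : t = s
    · simp [single, h]
    · have hne : enc i t ≠ enc i s := by simp [h]
      simp [single, hne, h]

lemma psi_single_out (p : Fin (6*k) → ℝ × ℝ) (i : Fin k) (c : ℝ × ℝ) {a : Fin (6*k)}
    (ha : blk a ≠ i) (z : ℝ × ℝ) : psi k p i c (single a z) = 0 := by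
  show (∑ t : Fin 6, cross (single a z (enc i t)) (p (enc i t) - c)) = 0
  refine Finset.sum_eq_zero fun t _ => ?_
  have : enc i t ≠ a := by
    intro h; rw [← h] at ha; simp at ha
  simp [single, this]

lemma psi_edgeVec_in (p : Fin (6*k) → ℝ × ℝ) (i : Fin k) (c : ℝ × ℝ) {a b : Fin (6*k)}
    (hab : a ≠ b) (ha : blk a = i) (hb : blk b = i) :
    psi k p i c (edgeVec p a b) = 0 := by
  obtain ⟨sa, rfl⟩ : ∃ s, a = enc i s := ⟨slot a, by rw [← ha, enc_blk_slot]⟩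
  obtain ⟨sb, rfl⟩ : ∃ s, b = enc i s := ⟨slot b, by rw [← hb, enc_blk_slot]⟩
  rw [edgeVec_decomp hab, map_add, psi_single_in, psi_single_in]
  simp only [cross, Prod.fst_sub, Prod.snd_sub]
  ring

lemma psi_edgeVec_out (p : Fin (6*k) → ℝ × ℝ) (i : Fin k) (c : ℝ × ℝ) {a b : Fin (6*k)}
    (ha : blk a ≠ i) (hb : blk b ≠ i) :
    psi k p i c (edgeVec p a b) = 0 := by
  by_cases hab : a = b
  · subst hab; simp [map_zero]
  rw [edgeVec_decomp hab, map_add, psi_single_out p i c ha, psi_single_out p i c hb, add_zero]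

lemma psi_edgeVec_half (p : Fin (6*k) → ℝ × ℝ) (i : Fin k) (c : ℝ × ℝ) {a b : Fin (6*k)}
    (ha : blk a = i) (hb : blk b ≠ i) :
    psi k p i c (edgeVec p a b) = cross (p a - p b) (p a - c) := by
  have hab : a ≠ b := by intro h; rw [h] at ha; exact hb ha
  obtain ⟨sa, rfl⟩ : ∃ s, a = enc i s := ⟨slot a, by rw [← ha, enc_blk_slot]⟩
  rw [edgeVec_decomp hab, map_add, psi_single_out p i c hb, add_zero, psi_single_in]

end Sharp5

set_option maxHeartbeats 1000000
noncomputable section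
namespace Sharp5
set_option linter.unusedSectionVars false
set_option maxHeartbeats 1000000
variable {k : ℕ}

lemma sum_univ_nine {β : Type*} [AddCommMonoid β] (f : Fin 9 → β) :
    ∑ i : Fin 9, f i = f 0 + f 1 + f 2 + f 3 + f 4 + f 5 + f 6 + f 7 + f 8 := by
  rw [Fin.sum_univ_castSucc, Fin.sum_univ_eight]
  rfl

@[simp] lemma fv0 : ((0:Fin 6)).val = 0 := rfl
@[simp] lemma fv1 : ((1:Fin 6)).val = 1 := rfl
@[simp] lemma fv2 : ((2:Fin 6)).val = 2 := rfl
@[simp] lemma fv3 : ((3:Fin 6)).val = 3 := rfl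
@[simp] lemma fv4 : ((4:Fin 6)).val = 4 := rfl
@[simp] lemma fv5 : ((5:Fin 6)).val = 5 := rfl

def ePairs : Fin 9 → Fin 6 × Fin 6 := ![(0,1),(0,2),(1,2),(0,3),(1,3),(0,4),(1,4),(0,5),(1,5)]
@[simp] lemma eP0 : ePairs 0 = (0,1) := rfl
@[simp] lemma eP1 : ePairs 1 = (0,2) := rfl
@[simp] lemma eP2 : ePairs 2 = (1,2) := rfl
@[simp] lemma eP3 : ePairs 3 = (0,3) := rfl
@[simp] lemma eP4 : ePairs 4 = (1,3) := rfl
@[simp] lemma eP5 : ePairs 5 = (0,4) := rfl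
@[simp] lemma eP6 : ePairs 6 = (1,4) := rfl
@[simp] lemma eP7 : ePairs 7 = (0,5) := rfl
@[simp] lemma eP8 : ePairs 8 = (1,5) := rfl

lemma ePairs_ne : ∀ j : Fin 9, (ePairs j).1 ≠ (ePairs j).2 := by decide

variable [NeZero k]

def bigFam (k : ℕ) [NeZero k] : (Fin k × Fin 9) ⊕ Fin k → (Fin (6*k) → ℝ × ℝ)
  | .inl x => edgeVec (pt k) (enc x.1 (ePairs x.2).1) (enc x.1 (ePairs x.2).2)
  | .inr i => edgeVec (pt k) (enc i 3) (enc (i+1) 2)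

lemma add_one_ne (hk : 2 ≤ k) (i : Fin k) : i + 1 ≠ i := by
  intro h
  have hvone : ((1:Fin k)).val = 1 := by rw [Fin.val_one', Nat.mod_eq_of_lt (by omega)]
  have h1 : (1 : Fin k) = 0 := by
    have := add_left_cancel (a := i) (b := (1:Fin k)) (c := 0) (by simpa using h)
    simpa using this
  rw [h1] at hvone; simp at hvone

lemma bigFam_li (hk : 2 ≤ k) : LinearIndependent ℝ (bigFam k) := by
  rw [Fintype.linearIndependent_iff]
  intro c hc
  -- Step 1 : connector coefficients vanish
  have hconn : ∀ i : Fin k, c (.inr i) = 0 := by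
    intro i
    have h1 := congrArg (psi k (pt k) i (pt k (enc i 2))) hc
    rw [map_zero, map_sum] at h1
    simp only [map_smul, smul_eq_mul] at h1
    rw [Fintype.sum_sum_type] at h1
    have hinl : ∀ x : Fin k × Fin 9,
        psi k (pt k) i (pt k (enc i 2)) (bigFam k (.inl x)) = 0 := by
      rintro ⟨i', j⟩
      rcases eq_or_ne i' i with rfl | hne
      · refine psi_edgeVec_in _ _ _ ?_ (by simp) (by simp)
        simp only [ne_eq, enc_eq_enc, not_and]
        intro _
        exact ePairs_ne j
      · exact psi_edgeVec_out _ _ _ (by simp [hne]) (by simp [hne])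
    have hz1 : (∑ a₁ : Fin k × Fin 9,
        c (Sum.inl a₁) * (psi k (pt k) i (pt k (enc i 2))) (bigFam k (Sum.inl a₁))) = 0 :=
      Finset.sum_eq_zero fun x _ => by rw [hinl x, mul_zero]
    rw [hz1, zero_add] at h1
    have hinr : ∀ i' : Fin k, i' ∈ Finset.univ → i' ≠ i →
        c (.inr i') * psi k (pt k) i (pt k (enc i 2)) (bigFam k (.inr i')) = 0 := by
      intro i' _ hne
      rcases eq_or_ne (i'+1) i with he | hne2
      · show c _ * psi k (pt k) i _ (edgeVec (pt k) (enc i' 3) (enc (i'+1) 2)) = 0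
        rw [edgeVec_comm, psi_edgeVec_half _ _ _ (by simp [he]) (by simp [hne]), he]
        simp
      · show c _ * psi k (pt k) i _ (edgeVec (pt k) (enc i' 3) (enc (i'+1) 2)) = 0
        rw [psi_edgeVec_out _ _ _ (by simp [hne]) (by simp [hne2]), mul_zero]
    rw [Finset.sum_eq_single i hinr (by simp)] at h1
    have hval : psi k (pt k) i (pt k (enc i 2)) (bigFam k (.inr i)) =
        (((i+1 : Fin k)).val : ℝ) - (i.val : ℝ) := by
      show psi k (pt k) i _ (edgeVec (pt k) (enc i 3) (enc (i+1) 2)) = _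
      rw [psi_edgeVec_half _ _ _ (by simp) (by simp [add_one_ne hk i])]
      simp only [pt_enc, cross, Prod.fst_sub, Prod.snd_sub, fv2, fv3]
      push_cast
      ring
    rw [hval] at h1
    have hne0 : (((i+1 : Fin k)).val : ℝ) - (i.val : ℝ) ≠ 0 := by
      intro h
      have : ((i+1 : Fin k)).val = i.val := by exact_mod_cast sub_eq_zero.mp h
      exact add_one_ne hk i (Fin.ext this)
    exact (mul_eq_zero.mp h1).resolve_right hne0
  -- Step 2 : evaluations
  have hEval2 : ∀ (i : Fin k) (t0 : Fin 6),
      (∑ j : Fin 9, c (.inl (i, j)) • bigFam k (.inl (i, j)) (enc i t0)) = 0 := by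
    intro i t0
    have h2 := congrFun hc (enc i t0)
    rw [Finset.sum_apply] at h2
    simp only [Pi.smul_apply, Pi.zero_apply] at h2
    rw [Fintype.sum_sum_type] at h2
    have hz2 : (∑ a₂ : Fin k, c (Sum.inr a₂) • bigFam k (Sum.inr a₂) (enc i t0)) = 0 :=
      Finset.sum_eq_zero fun i' _ => by rw [hconn i', zero_smul]
    rw [hz2, add_zero, Fintype.sum_prod_type] at h2
    have hoff : ∀ i' : Fin k, i' ∈ Finset.univ → i' ≠ i →
        (∑ j : Fin 9, c (.inl (i', j)) • bigFam k (.inl (i', j)) (enc i t0)) = 0 := by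
      intro i' _ hne
      refine Finset.sum_eq_zero fun j _ => ?_
      have hne' : ¬ (i = i') := fun h => hne h.symm
      show c _ • edgeVec (pt k) (enc i' (ePairs j).1) (enc i' (ePairs j).2) (enc i t0) = 0
      rw [show edgeVec (pt k) (enc i' (ePairs j).1) (enc i' (ePairs j).2) (enc i t0) = 0 by
        simp [edgeVec, enc_eq_enc, hne'], smul_zero]
    rwa [Finset.sum_eq_single i hoff (by simp)] at h2
  -- block coefficients vanish
  have hblock : ∀ (i : Fin k) (j : Fin 9), c (.inl (i, j)) = 0 := by
    intro i
    have e5 := hEval2 i 5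
    have e4 := hEval2 i 4
    have e3 := hEval2 i 3
    have e2 := hEval2 i 2
    have e1 := hEval2 i 1
    rw [sum_univ_nine] at e5 e4 e3 e2 e1
    simp only [bigFam, eP0, eP1, eP2, eP3, eP4, eP5, eP6, eP7, eP8] at e5 e4 e3 e2 e1
    simp only [edgeVec, enc_eq_enc, pt_enc] at e5 e4 e3 e2 e1
    norm_num [Fin.ext_iff, Prod.ext_iff, Prod.smul_fst, Prod.smul_snd, smul_eq_mul]
      at e5 e4 e3 e2 e1
    have z7 : c (.inl (i, 7)) = 0 := by linarith [e5.1, e5.2]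
    have z8 : c (.inl (i, 8)) = 0 := by linarith [e5.1, e5.2]
    have z5 : c (.inl (i, 5)) = 0 := by linarith [e4.1, e4.2]
    have z6 : c (.inl (i, 6)) = 0 := by linarith [e4.1, e4.2]
    have z3 : c (.inl (i, 3)) = 0 := by linarith [e3.1, e3.2]
    have z4 : c (.inl (i, 4)) = 0 := by linarith [e3.1, e3.2]
    have z1 : c (.inl (i, 1)) = 0 := by linarith [e2.1, e2.2]
    have z2 : c (.inl (i, 2)) = 0 := by linarith [e2.1, e2.2]
    have z0 : c (.inl (i, 0)) = 0 := by linarith [e1.1, e1.2, z2, z4, z6, z8]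
    intro j
    fin_cases j <;> assumption
  rintro (⟨i, j⟩ | i)
  · exact hblock i j
  · exact hconn i
end Sharp5

noncomputable section
namespace Sharp5
set_option linter.unusedSectionVars false
set_option maxHeartbeats 1000000
variable {k : ℕ}

def sumBlk (k : ℕ) (i : Fin k) : (Fin (6*k) → ℝ × ℝ) →ₗ[ℝ] ℝ × ℝ :=
  ∑ t : Fin 6, LinearMap.proj (R := ℝ) (φ := fun _ : Fin (6*k) => ℝ × ℝ) (enc i t)

def Phi (k : ℕ) (p : Fin (6*k) → ℝ × ℝ) (i : Fin k) :
    (Fin (6*k) → ℝ × ℝ) →ₗ[ℝ] (ℝ × ℝ) × ℝ :=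
  LinearMap.prod (sumBlk k i) (psi k p i 0)

lemma Phi_apply (p : Fin (6*k) → ℝ × ℝ) (i : Fin k) (f : Fin (6*k) → ℝ × ℝ) :
    Phi k p i f = (∑ t : Fin 6, f (enc i t), ∑ t : Fin 6, cross (f (enc i t)) (p (enc i t) - 0)) := by
  refine Prod.ext_iff.mpr ⟨?_, rfl⟩
  show sumBlk k i f = _
  simp [sumBlk, LinearMap.sum_apply]

def U (i : Fin k) : Set (Fin (6*k)) := Set.range (enc i)

lemma single_sum (i : Fin k) (s : Fin 6) (z : ℝ × ℝ) :
    (∑ t : Fin 6, single (enc i s) z (enc i t)) = z := by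
  rw [show (fun t => single (enc i s) z (enc i t)) = (fun t => if t = s then z else 0) from ?_]
  · rw [Finset.sum_ite_eq' Finset.univ s fun _ => z]; simp
  · funext t
    by_cases h : t = s
    · simp [single, h]
    · have hne : enc i t ≠ enc i s := by simp [h]
      simp [single, hne, h]

lemma single_cross_sum (p : Fin (6*k) → ℝ × ℝ) (i : Fin k) (s : Fin 6) (z : ℝ × ℝ) :
    (∑ t : Fin 6, cross (single (enc i s) z (enc i t)) (p (enc i t))) = cross z (p (enc i s)) := by
  rw [show (fun t => cross (single (enc i s) z (enc i t)) (p (enc i t))) =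
      (fun t => if t = s then cross z (p (enc i t)) else 0) from ?_]
  · rw [Finset.sum_ite_eq' Finset.univ s fun t => cross z (p (enc i t))]; simp
  · funext t
    by_cases h : t = s
    · simp [single, h]
    · have hne : enc i t ≠ enc i s := by simp [h]
      simp [single, hne, h]

lemma single_mem_vanishOn (i : Fin k) (s : Fin 6) (z : ℝ × ℝ) :
    single (enc i s) z ∈ vanishOn (U i) := by
  intro v hv
  have : v ≠ enc i s := by
    intro h; exact hv ⟨s, h.symm⟩
  simp [single, this]

lemma Phi_single (p : Fin (6*k) → ℝ × ℝ) (i : Fin k) (s : Fin 6) (z : ℝ × ℝ) :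
    Phi k p i (single (enc i s) z) = (z, cross z (p (enc i s))) := by
  rw [Phi_apply]
  congr 1
  · exact single_sum i s z
  · simp only [sub_zero]
    exact single_cross_sum p i s z

/-- in-block potential edges -/
def blockSet (k : ℕ) (i : Fin k) : Set (Sym2 (Fin (6*k))) := {e | ∀ v ∈ e, blk v = i}

def S (k : ℕ) (p : Fin (6*k) → ℝ × ℝ) (i : Fin k) : Submodule ℝ (Fin (6*k) → ℝ × ℝ) :=
  Submodule.span ℝ (edgeVecs p (blockSet k i))

lemma finrank_vanishOn_le (i : Fin k) :
    Module.finrank ℝ (vanishOn (U i) : Submodule ℝ (Fin (6*k) → ℝ × ℝ)) ≤ 12 := by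
  have h12 : Module.finrank ℝ (Fin 6 → ℝ × ℝ) = 12 := by
    simp [Module.finrank_pi_fintype]
  rw [← h12]
  refine LinearMap.finrank_le_finrank_of_injective
    (f := ((LinearMap.funLeft ℝ (ℝ × ℝ) (enc i)).comp
      (vanishOn (U i) : Submodule ℝ (Fin (6*k) → ℝ × ℝ)).subtype)) ?_
  intro f g hfg
  apply Subtype.ext
  funext v
  by_cases hv : v ∈ U i
  · obtain ⟨t, rfl⟩ := hv
    exact congrFun hfg t
  · rw [f.2 v hv, g.2 v hv]

lemma edgeVec_mem (p : Fin (6*k) → ℝ × ℝ) (i : Fin k) {a b : Fin (6*k)}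
    (ha : blk a = i) (hb : blk b = i) :
    edgeVec p a b ∈ (vanishOn (U i) ⊓ LinearMap.ker (Phi k p i) :
      Submodule ℝ (Fin (6*k) → ℝ × ℝ)) := by
  rcases eq_or_ne a b with rfl | hab
  · rw [edgeVec_self]
    exact Submodule.zero_mem _
  obtain ⟨sa, rfl⟩ : ∃ s, a = enc i s := ⟨slot a, by rw [← ha, enc_blk_slot]⟩
  obtain ⟨sb, rfl⟩ : ∃ s, b = enc i s := ⟨slot b, by rw [← hb, enc_blk_slot]⟩
  rw [edgeVec_decomp hab]
  refine Submodule.mem_inf.mpr ⟨?_, ?_⟩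
  · exact Submodule.add_mem _ (single_mem_vanishOn i sa _) (single_mem_vanishOn i sb _)
  · rw [LinearMap.mem_ker, map_add, Phi_single, Phi_single, Prod.ext_iff]
    constructor
    · simp only [Prod.fst_add, Prod.fst_zero]
      abel
    · simp only [Prod.snd_add, Prod.snd_zero, cross, Prod.fst_sub, Prod.snd_sub]
      ring

lemma S_le (p : Fin (6*k) → ℝ × ℝ) (i : Fin k) :
    S k p i ≤ (vanishOn (U i) ⊓ LinearMap.ker (Phi k p i) :
      Submodule ℝ (Fin (6*k) → ℝ × ℝ)) := by
  rw [S, Submodule.span_le]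
  rintro x ⟨a, b, hm, rfl⟩
  have ha : blk a = i := hm a (Sym2.mem_mk_left a b)
  have hb : blk b = i := hm b (Sym2.mem_mk_right a b)
  exact edgeVec_mem p i ha hb

lemma finrank_S_le (p : Fin (6*k) → ℝ × ℝ) (i : Fin k) :
    Module.finrank ℝ (S k p i) ≤ 9 := by
  by_cases hconst : ∀ s t : Fin 6, p (enc i s) = p (enc i t)
  · have hS : S k p i = ⊥ := by
      rw [S, Submodule.span_eq_bot]
      rintro x ⟨a, b, hm, rfl⟩
      have ha : blk a = i := hm a (Sym2.mem_mk_left a b)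
      have hb : blk b = i := hm b (Sym2.mem_mk_right a b)
      obtain ⟨sa, rfl⟩ : ∃ s, a = enc i s := ⟨slot a, by rw [← ha, enc_blk_slot]⟩
      obtain ⟨sb, rfl⟩ : ∃ s, b = enc i s := ⟨slot b, by rw [← hb, enc_blk_slot]⟩
      have hpe := hconst sa sb
      funext v
      simp [edgeVec, hpe]
    rw [hS]
    simp
  · push_neg at hconst
    obtain ⟨s, t, hst⟩ := hconst
    have hstne : s ≠ t := by rintro rfl; exact hst rfl
    set Φr := (Phi k p i).domRestrict (vanishOn (U i)) with hΦr
    -- surjectivity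
    have hsurj : Function.Surjective Φr := by
      rintro ⟨σ, r⟩
      set d : ℝ × ℝ := p (enc i s) - p (enc i t) with hd
      have hdne : d ≠ 0 := sub_ne_zero.mpr hst
      set n : ℝ := d.1^2 + d.2^2 with hn
      have hnne : n ≠ 0 := by
        intro h
        apply hdne
        have h1 : d.1 = 0 := by nlinarith [sq_nonneg d.1, sq_nonneg d.2]
        have h2 : d.2 = 0 := by nlinarith [sq_nonneg d.1, sq_nonneg d.2]
        exact Prod.ext h1 h2
      set z : ℝ × ℝ := ((r - cross σ (p (enc i t))) / n) • (d.2, -d.1) with hz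
      refine ⟨⟨single (enc i s) z + single (enc i t) (σ - z),
        Submodule.add_mem _ (single_mem_vanishOn i s _) (single_mem_vanishOn i t _)⟩, ?_⟩
      show Phi k p i (single (enc i s) z + single (enc i t) (σ - z)) = (σ, r)
      rw [map_add, Phi_single, Phi_single, Prod.ext_iff]
      constructor
      · show z + (σ - z) = σ
        ring
      · show cross z (p (enc i s)) + cross (σ - z) (p (enc i t)) = r
        have hcz : cross z d = r - cross σ (p (enc i t)) := by
          rw [hz]
          simp only [cross, Prod.smul_fst, Prod.smul_snd, smul_eq_mul]
          field_simp
          ring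
        have expand : cross z (p (enc i s)) + cross (σ - z) (p (enc i t)) =
            cross z d + cross σ (p (enc i t)) := by
          simp only [cross, hd, Prod.fst_sub, Prod.snd_sub]
          ring
        rw [expand, hcz]
        ring
    have hrange : LinearMap.range Φr = ⊤ := LinearMap.range_eq_top.mpr hsurj
    have hrn := LinearMap.finrank_range_add_finrank_ker Φr
    rw [hrange] at hrn
    have h3 : Module.finrank ℝ (⊤ : Submodule ℝ ((ℝ × ℝ) × ℝ)) = 3 := by
      rw [finrank_top]
      simp
    rw [h3] at hrn
    have h12 := finrank_vanishOn_le (k := k) i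
    have hker : Module.finrank ℝ (LinearMap.ker Φr) ≤ 9 := by omega
    have hmap : Submodule.map (vanishOn (U i)).subtype (LinearMap.ker Φr) =
        (vanishOn (U i) ⊓ LinearMap.ker (Phi k p i)) := by
      rw [hΦr, LinearMap.ker_domRestrict, Submodule.map_comap_subtype]
    have hfr : Module.finrank ℝ
        ((vanishOn (U i) ⊓ LinearMap.ker (Phi k p i)) : Submodule ℝ (Fin (6*k) → ℝ × ℝ)) ≤ 9 := by
      rw [← hmap, Submodule.finrank_map_subtype_eq]
      exact hker
    exact le_trans (Submodule.finrank_mono (S_le p i)) hfr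

lemma finrank_sup_le' (s t : Submodule ℝ (Fin (6*k) → ℝ × ℝ)) :
    Module.finrank ℝ (s ⊔ t : Submodule ℝ _) ≤ Module.finrank ℝ s + Module.finrank ℝ t := by
  have := Submodule.finrank_sup_add_finrank_inf_eq s t
  omega

lemma finrank_iSup_le {n : ℕ} (f : Fin n → Submodule ℝ (Fin (6*k) → ℝ × ℝ)) :
    Module.finrank ℝ (⨆ i, f i : Submodule ℝ _) ≤ ∑ i, Module.finrank ℝ (f i) := by
  induction n with
  | zero =>
    rw [iSup_of_empty]
    simp
  | succ m ih =>
    have hsup : (⨆ i : Fin (m+1), f i) = (⨆ i : Fin m, f i.castSucc) ⊔ f (Fin.last m) := by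
      apply le_antisymm
      · refine iSup_le fun i => ?_
        refine Fin.lastCases ?_ (fun j => ?_) i
        · exact le_sup_right
        · exact le_sup_of_le_left (le_iSup (fun j : Fin m => f j.castSucc) j)
      · exact sup_le (iSup_le fun j => le_iSup f j.castSucc) (le_iSup f (Fin.last m))
    rw [hsup, Fin.sum_univ_castSucc]
    have h1 := finrank_sup_le' (⨆ i : Fin m, f i.castSucc) (f (Fin.last m))
    have h2 := ih (fun j => f j.castSucc)
    omega

def wvec (p : Fin (6*k) → ℝ × ℝ) [NeZero k] : Fin k → (Fin (6*k) → ℝ × ℝ) :=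
  fun i => edgeVec p (enc i 3) (enc (i+1) 2)

variable [NeZero k]

lemma finrank_W_le (p : Fin (6*k) → ℝ × ℝ) :
    Module.finrank ℝ (Submodule.span ℝ (Set.range (wvec p)) : Submodule ℝ _) ≤ k := by
  rw [Submodule.span_range_eq_iSup]
  refine le_trans (finrank_iSup_le _) ?_
  have : ∀ i : Fin k, Module.finrank ℝ (Submodule.span ℝ {wvec p i} : Submodule ℝ _) ≤ 1 := by
    intro i
    by_cases h : wvec p i = 0
    · rw [h, Submodule.span_zero_singleton]
      simp
    · rw [finrank_span_singleton h]
  calc (∑ i : Fin k, Module.finrank ℝ (Submodule.span ℝ {wvec p i} : Submodule ℝ _))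
      ≤ ∑ _i : Fin k, 1 := Finset.sum_le_sum fun i _ => this i
    _ = k := by simp

lemma rank_upper (p : Fin (6*k) → ℝ × ℝ) : rankOf p (G k).edgeSet ≤ 10 * k := by
  have hsub : edgeVecs p (G k).edgeSet ⊆
      (((⨆ i, S k p i) ⊔ Submodule.span ℝ (Set.range (wvec p))) :
        Submodule ℝ (Fin (6*k) → ℝ × ℝ)) := by
    rintro x ⟨a, b, he, rfl⟩
    rw [SimpleGraph.mem_edgeSet] at he
    obtain ⟨hne, hb | hc1 | hc2⟩ := he
    · apply Submodule.mem_sup_left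
      have hmem : edgeVec p a b ∈ S k p (blk a) := by
        refine Submodule.subset_span ⟨a, b, ?_, rfl⟩
        intro v hv
        rcases Sym2.mem_iff.mp hv with rfl | rfl
        · rfl
        · exact hb.1.symm
      exact (le_iSup (fun i => S k p i) (blk a)) hmem
    · apply Submodule.mem_sup_right
      apply Submodule.subset_span
      refine ⟨blk a, ?_⟩
      have ha3 : a = enc (blk a) 3 := by rw [eq_enc_iff]; exact ⟨rfl, hc1.2.1⟩
      have hb2 : b = enc (blk a + 1) 2 := by rw [eq_enc_iff]; exact ⟨hc1.1, hc1.2.2⟩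
      rw [wvec, ← ha3, ← hb2]
    · apply Submodule.mem_sup_right
      apply Submodule.subset_span
      refine ⟨blk b, ?_⟩
      have hb3 : b = enc (blk b) 3 := by rw [eq_enc_iff]; exact ⟨rfl, hc2.2.1⟩
      have ha2 : a = enc (blk b + 1) 2 := by rw [eq_enc_iff]; exact ⟨hc2.1, hc2.2.2⟩
      rw [wvec, ← hb3, ← ha2, edgeVec_comm]
  have h1 : rankOf p (G k).edgeSet ≤ Module.finrank ℝ
      (((⨆ i, S k p i) ⊔ Submodule.span ℝ (Set.range (wvec p))) :
        Submodule ℝ (Fin (6*k) → ℝ × ℝ)) :=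
    Submodule.finrank_mono (Submodule.span_le.mpr hsub)
  have h2 := finrank_sup_le' (⨆ i, S k p i) (Submodule.span ℝ (Set.range (wvec p)))
  have h3 := finrank_iSup_le (fun i => S k p i)
  have h4 : (∑ i : Fin k, Module.finrank ℝ (S k p i)) ≤ 9 * k := by
    calc (∑ i : Fin k, Module.finrank ℝ (S k p i)) ≤ ∑ _i : Fin k, 9 :=
        Finset.sum_le_sum fun i _ => finrank_S_le p i
      _ = 9 * k := by simp [mul_comm]
  have h5 := finrank_W_le p
  omega

lemma rank_lower (hk : 2 ≤ k) : 10 * k ≤ rankOf (pt k) (G k).edgeSet := by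
  have hP23 : ∀ j : Fin 9, ¬((ePairs j).1 = 2 ∧ (ePairs j).2 = 3) := by decide
  have hP32 : ∀ j : Fin 9, ¬((ePairs j).1 = 3 ∧ (ePairs j).2 = 2) := by decide
  have hsub : Set.range (bigFam k) ⊆ edgeVecs (pt k) (G k).edgeSet := by
    rintro x ⟨y, rfl⟩
    rcases y with ⟨i, j⟩ | i
    · exact ⟨enc i (ePairs j).1, enc i (ePairs j).2,
        (SimpleGraph.mem_edgeSet (G k)).mpr (adj_block (ePairs_ne j) (hP23 j) (hP32 j)), rfl⟩
    · exact ⟨enc i 3, enc (i+1) 2, (SimpleGraph.mem_edgeSet (G k)).mpr (adj_conn i), rfl⟩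
  have hcard : Fintype.card ((Fin k × Fin 9) ⊕ Fin k) = 10 * k := by
    simp
    ring
  calc 10 * k = Module.finrank ℝ (Submodule.span ℝ (Set.range (bigFam k))) := by
        rw [finrank_span_eq_card (bigFam_li hk), hcard]
    _ ≤ rankOf (pt k) (G k).edgeSet := Submodule.finrank_mono (Submodule.span_mono hsub)

lemma genRank_eq (hk : 2 ≤ k) : genRank (G k) = 10 * k := by
  have hub : ∀ p : Fin (6*k) → ℝ × ℝ, rankOf p (G k).edgeSet ≤ 10 * k := rank_upper
  apply le_antisymm
  · exact ciSup_le hub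
  · exact le_trans (rank_lower hk) (le_ciSup ⟨10*k, by rintro x ⟨p, rfl⟩; exact hub p⟩ (pt k))

end Sharp5

/-- For every `k ≥ 2` there is a connected 5-regular simple graph on `6k` vertices whose
generic rank equals `10k`; so the order of the bound `r(G) ≥ (5/3)|V| - 1` is sharp. -/
theorem exists_five_regular_genRank_eq (k : ℕ) (hk : 2 ≤ k) :
    ∃ G : SimpleGraph (Fin (6 * k)),
      G.Connected ∧ (∀ v, Nat.card (G.neighborSet v) = 5) ∧ genRank G = 10 * k := by
  haveI : NeZero k := ⟨by omega⟩
  exact ⟨Sharp5.G k, Sharp5.connected hk, Sharp5.degree5 hk, Sharp5.genRank_eq hk⟩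
end
end
end
end

section
/- Let G = (V,E) be a finite simple connected graph which is regular of degree 3 and has |V| > 4 vertices. Then the generic rank satisfies r(G) = |E| (equivalently, the generic stress number s(G) = 0, i.e. there exists p : V → ℝ² for which the edge vectors {v_{ij}(p) : {i,j} ∈ E} are linearly independent). -/
section Aux
set_option linter.unusedSectionVars false
variable {V : Type*} [Fintype V] [DecidableEq V]

lemma edgeVec_symm (p : V → ℝ × ℝ) (i j : V) : edgeVec p i j = edgeVec p j i := by
  funext v
  by_cases hi : v = i
  · subst hi
    by_cases hj : v = j
    · subst hj; simp [edgeVec]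
    · simp [edgeVec, hj]
  · by_cases hj : v = j
    · subst hj; simp [edgeVec, hi]
    · simp [edgeVec, hi, hj]

/-- `eVec p e` : edge vector of an unordered pair -/
noncomputable def eVec (p : V → ℝ × ℝ) : Sym2 V → (V → ℝ × ℝ) :=
  Sym2.lift ⟨fun i j => edgeVec p i j, fun i j => edgeVec_symm p i j⟩

@[simp] lemma eVec_mk (p : V → ℝ × ℝ) (i j : V) : eVec p s(i, j) = edgeVec p i j := rfl

lemma edgeVec_apply_fst (p : V → ℝ × ℝ) (i j : V) : edgeVec p i j i = p i - p j := by
  simp [edgeVec]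

lemma edgeVec_apply_of_ne (p : V → ℝ × ℝ) {i j u : V} (hi : u ≠ i) (hj : u ≠ j) :
    edgeVec p i j u = 0 := by simp [edgeVec, hi, hj]

/-- independence of the edge vectors of a finset of edges. -/
def IndepOn (p : V → ℝ × ℝ) (s : Finset (Sym2 V)) : Prop :=
  ∀ g : Sym2 V → ℝ, ∑ e ∈ s, g e • eVec p e = 0 → ∀ e ∈ s, g e = 0

end Aux
section Aux2
set_option linter.unusedSectionVars false
variable {V : Type*} [Fintype V] [DecidableEq V]

/-- Edge finset, independent of decidability instances. -/
noncomputable def edgeFS (G : SimpleGraph V) : Finset (Sym2 V) := G.edgeSet.toFinite.toFinset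

lemma mem_edgeFS {G : SimpleGraph V} {e : Sym2 V} : e ∈ edgeFS G ↔ e ∈ G.edgeSet :=
  Set.Finite.mem_toFinset _

lemma indepOn_iff (p : V → ℝ × ℝ) (G : SimpleGraph V) :
    IndepOn p (edgeFS G) ↔ LinearIndependent ℝ (fun e : G.edgeSet => eVec p (e : Sym2 V)) := by
  haveI : Fintype G.edgeSet := G.edgeSet.toFinite.fintype
  have hfs : edgeFS G = G.edgeSet.toFinset := Set.Finite.toFinset_eq_toFinset _
  rw [Fintype.linearIndependent_iff]
  constructor
  · intro h g hg
    classical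
    set gbar : Sym2 V → ℝ := fun e => if he : e ∈ G.edgeSet then g ⟨e, he⟩ else 0 with hgbar
    have hsum : ∑ e ∈ edgeFS G, gbar e • eVec p e = 0 := by
      rw [hfs, ← Finset.sum_set_coe (f := fun e => gbar e • eVec p e)]
      rw [← hg]
      apply Finset.sum_congr rfl
      intro x _
      simp [hgbar, x.2]
    intro i
    have := h gbar hsum i (by rw [mem_edgeFS]; exact i.2)
    simpa [hgbar, i.2] using this
  · intro h g hg e he
    rw [mem_edgeFS] at he
    have hsum : ∑ e : G.edgeSet, g (e : Sym2 V) • eVec p (e : Sym2 V) = 0 := by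
      rw [Finset.sum_set_coe (f := fun e : Sym2 V => g e • eVec p e), ← hfs]
      exact hg
    exact h (fun e => g (e : Sym2 V)) hsum ⟨e, he⟩

lemma isOpen_indepOn (G : SimpleGraph V) :
    IsOpen {p : V → ℝ × ℝ | IndepOn p (edgeFS G)} := by
  have : {p : V → ℝ × ℝ | IndepOn p (edgeFS G)} =
      (fun (p : V → ℝ × ℝ) => fun e : G.edgeSet => eVec p (e : Sym2 V)) ⁻¹'
      {f | LinearIndependent ℝ f} := by
    ext p; exact indepOn_iff p G
  rw [this]
  haveI : Finite G.edgeSet := G.edgeSet.toFinite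
  apply IsOpen.preimage _ isOpen_setOf_linearIndependent
  apply continuous_pi
  intro e
  apply continuous_pi
  intro u
  obtain ⟨e, he⟩ := e
  show Continuous fun p : V → ℝ × ℝ => eVec p e u
  clear he
  induction e using Sym2.ind with
  | _ i j =>
    show Continuous fun p : V → ℝ × ℝ => edgeVec p i j u
    unfold edgeVec
    split_ifs
    · exact ((continuous_apply i).sub (continuous_apply j))
    · exact ((continuous_apply j).sub (continuous_apply i))
    · exact continuous_const

end Aux2
section Aux3
set_option linter.unusedSectionVars false
variable {V : Type*} [Fintype V] [DecidableEq V]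

lemma exists_perturb (G : SimpleGraph V) (p : V → ℝ × ℝ)
    (h : IndepOn p (edgeFS G)) (c : V) (w : ℝ × ℝ) :
    ∃ t : ℝ, t ≠ 0 ∧ IndepOn (Function.update p c (p c + t • w)) (edgeFS G) := by
  set φ : ℝ → (V → ℝ × ℝ) := fun t => Function.update p c (p c + t • w) with hφ
  have hcont : Continuous φ := by
    apply continuous_pi
    intro u
    by_cases hu : u = c
    · subst hu
      simp only [hφ, Function.update_self]
      exact continuous_const.add (continuous_id.smul continuous_const)
    · simp only [hφ, Function.update_of_ne hu]
      exact continuous_const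
  have hU : IsOpen (φ ⁻¹' {q | IndepOn q (edgeFS G)}) :=
    (isOpen_indepOn G).preimage hcont
  have h0 : (0 : ℝ) ∈ φ ⁻¹' {q | IndepOn q (edgeFS G)} := by
    simp only [Set.mem_preimage, hφ, zero_smul, add_zero, Function.update_eq_self,
      Set.mem_setOf_eq]
    exact h
  obtain ⟨δ, hδ, hball⟩ := Metric.isOpen_iff.1 hU 0 h0
  refine ⟨δ / 2, by positivity, ?_⟩
  exact hball (by simp [Real.dist_eq, abs_of_pos hδ, abs_of_pos (half_pos hδ)]; linarith)

lemma ne_of_indepOn {G : SimpleGraph V} {p : V → ℝ × ℝ} (h : IndepOn p (edgeFS G))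
    {i j : V} (hij : i ≠ j) (he : s(i, j) ∈ edgeFS G) : p i ≠ p j := by
  intro heq
  classical
  have hz : eVec p s(i, j) = 0 := by
    funext u
    show edgeVec p i j u = 0
    by_cases h1 : u = i
    · subst h1; simp [edgeVec, heq]
    · by_cases h2 : u = j
      · subst h2; simp [edgeVec, heq, h1]
      · exact edgeVec_apply_of_ne p h1 h2
  have hsum : ∑ e ∈ edgeFS G, (fun e => if e = s(i, j) then (1 : ℝ) else 0) e • eVec p e = 0 := by
    rw [Finset.sum_eq_single s(i,j)]
    · simp [hz]
    · intro b _ hb; simp [hb]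
    · intro hn; exact absurd he hn
  have := h _ hsum s(i, j) he
  simp at this

/-- neighbor finset, independent of decidability. -/
noncomputable def nbrFS (G : SimpleGraph V) (u : V) : Finset V :=
  (G.neighborSet u).toFinite.toFinset

lemma mem_nbrFS {G : SimpleGraph V} {u w : V} : w ∈ nbrFS G u ↔ G.Adj u w :=
  Set.Finite.mem_toFinset _

lemma filter_incident (G : SimpleGraph V) (u : V) :
    (edgeFS G).filter (fun e => u ∈ e) = (nbrFS G u).image (fun w => s(u, w)) := by
  ext e
  simp only [Finset.mem_filter, Finset.mem_image, mem_edgeFS, mem_nbrFS]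
  constructor
  · rintro ⟨he, hu⟩
    induction e using Sym2.ind with
    | _ x y =>
      rw [Sym2.mem_iff] at hu
      rcases hu with rfl | rfl
      · exact ⟨y, (SimpleGraph.mem_edgeSet G).1 he, rfl⟩
      · exact ⟨x, ((SimpleGraph.mem_edgeSet G).1 he).symm, Sym2.eq_swap⟩
  · rintro ⟨w, hw, rfl⟩
    exact ⟨hw, Sym2.mem_mk_left u w⟩

lemma sum_eVec_apply (G : SimpleGraph V) (p : V → ℝ × ℝ) (g : Sym2 V → ℝ) (u : V) :
    (∑ e ∈ edgeFS G, g e • eVec p e) u = ∑ w ∈ nbrFS G u, g s(u, w) • (p u - p w) := by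
  classical
  rw [Finset.sum_apply]
  rw [← Finset.sum_filter_add_sum_filter_not (edgeFS G) (fun e => u ∈ e)
    (fun e => (g e • eVec p e) u)]
  have h2 : ∑ e ∈ (edgeFS G).filter (fun e => ¬ u ∈ e), (g e • eVec p e) u = 0 := by
    apply Finset.sum_eq_zero
    intro e he
    rw [Finset.mem_filter] at he
    obtain ⟨-, hu⟩ := he
    induction e using Sym2.ind with
    | _ x y =>
      rw [Sym2.mem_iff] at hu
      push_neg at hu
      show g s(x,y) • edgeVec p x y u = 0
      rw [edgeVec_apply_of_ne p hu.1 hu.2, smul_zero]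
  rw [h2, add_zero, filter_incident, Finset.sum_image]
  · apply Finset.sum_congr rfl
    intro w hw
    show g s(u,w) • edgeVec p u w u = _
    rw [edgeVec_apply_fst]
  · intro x _ y _ hxy
    rcases Sym2.eq_iff.1 hxy with ⟨-, h⟩ | ⟨h1, h2⟩
    · exact h
    · exact h2.trans h1
end Aux3
section Aux4
set_option linter.unusedSectionVars false
variable {V : Type*} [Fintype V] [DecidableEq V]

lemma eVec_map_val {v : V} (p : V → ℝ × ℝ) (e' : Sym2 {u : V // u ≠ v}) (u : {u : V // u ≠ v}) :
    eVec (fun x : {u : V // u ≠ v} => p ↑x) e' u = eVec p (Sym2.map Subtype.val e') ↑u := by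
  induction e' using Sym2.ind with
  | _ i j =>
    show edgeVec (fun x : {u : V // u ≠ v} => p ↑x) i j u = edgeVec p ↑i ↑j ↑u
    unfold edgeVec
    by_cases h1 : u = i
    · subst h1; simp
    · have h1' : (u : V) ≠ ↑i := fun hh => h1 (Subtype.ext hh)
      by_cases h2 : u = j
      · subst h2; simp [h1, h1']
      · have h2' : (u : V) ≠ ↑j := fun hh => h2 (Subtype.ext hh)
        simp [h1, h2, h1', h2']

lemma eVec_incident_val {v : V} (p : V → ℝ × ℝ) (w : V) (u : {u : V // u ≠ v}) :
    eVec p s(v, w) ↑u = if (u : V) = w then p w - p v else 0 := by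
  show edgeVec p v w ↑u = _
  unfold edgeVec
  rw [if_neg u.2]
  by_cases h : (u : V) = w <;> simp [h]

lemma mem_edgeFS_del {v : V} {G : SimpleGraph V} {e' : Sym2 {u : V // u ≠ v}} :
    e' ∈ edgeFS (G.comap (Subtype.val : {u : V // u ≠ v} → V)) ↔
      Sym2.map Subtype.val e' ∈ edgeFS G := by
  rw [mem_edgeFS, mem_edgeFS]
  induction e' using Sym2.ind with
  | _ i j => rfl

lemma restricted_sum (G : SimpleGraph V) (v : V) (p : V → ℝ × ℝ) (g : Sym2 V → ℝ)
    (h : ∑ e ∈ edgeFS G, g e • eVec p e = 0) (u : {u : V // u ≠ v}) :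
    (∑ e' ∈ edgeFS (G.comap (Subtype.val : {u : V // u ≠ v} → V)),
        g (Sym2.map Subtype.val e') • eVec (fun x : {u : V // u ≠ v} => p ↑x) e' u)
      + (∑ w ∈ nbrFS G v, g s(v, w) •
          (if (u : V) = w then p w - p v else 0)) = 0 := by
  classical
  have hR : ∑ e ∈ edgeFS G, g e • eVec p e ↑u = 0 := by
    have := congrFun h ↑u
    simpa [Finset.sum_apply] using this
  rw [← Finset.sum_filter_add_sum_filter_not (edgeFS G) (fun e => v ∈ e)
    (fun e => g e • eVec p e ↑u)] at hR
  have h1 : (∑ e' ∈ edgeFS (G.comap (Subtype.val : {u : V // u ≠ v} → V)),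
        g (Sym2.map Subtype.val e') • eVec (fun x : {u : V // u ≠ v} => p ↑x) e' u)
      = ∑ e ∈ (edgeFS G).filter (fun e => ¬ v ∈ e), g e • eVec p e ↑u := by
    apply Finset.sum_bij (i := fun (e' : Sym2 {u : V // u ≠ v}) _ => Sym2.map Subtype.val e')
    · intro e' he'
      rw [Finset.mem_filter]
      refine ⟨mem_edgeFS_del.1 he', ?_⟩
      rw [Sym2.mem_map]
      rintro ⟨a, -, ha⟩
      exact a.2 ha
    · intro a _ b _ hab
      exact Sym2.map.injective Subtype.val_injective hab
    · intro e he
      rw [Finset.mem_filter] at he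
      obtain ⟨he, hv⟩ := he
      induction e using Sym2.ind with
      | _ x y =>
        have hx : x ≠ v := fun hh => hv (hh ▸ Sym2.mem_mk_left x y)
        have hy : y ≠ v := fun hh => hv (hh ▸ Sym2.mem_mk_right x y)
        refine ⟨s(⟨x, hx⟩, ⟨y, hy⟩), ?_, rfl⟩
        exact mem_edgeFS_del.2 he
    · intro e' he'
      rw [eVec_map_val]
  have h2 : (∑ w ∈ nbrFS G v, g s(v, w) • (if (u : V) = w then p w - p v else 0))
      = ∑ e ∈ (edgeFS G).filter (fun e => v ∈ e), g e • eVec p e ↑u := by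
    rw [filter_incident, Finset.sum_image]
    · apply Finset.sum_congr rfl
      intro w hw
      rw [eVec_incident_val]
    · intro x _ y _ hxy
      rcases Sym2.eq_iff.1 hxy with ⟨-, h⟩ | ⟨h1, h2⟩
      · exact h
      · exact h2.trans h1
  rw [h1, h2, add_comm]
  exact hR

end Aux4
section Aux5
set_option linter.unusedSectionVars false
variable {V : Type*} [Fintype V] [DecidableEq V]

/-- extend a realization of `V ∖ {v}` by placing `v` at `q`. -/
noncomputable def extendP {v : V} (p' : {u : V // u ≠ v} → ℝ × ℝ) (q : ℝ × ℝ) : V → ℝ × ℝ :=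
  fun u => if h : u = v then q else p' ⟨u, h⟩

@[simp] lemma extendP_v {v : V} (p' : {u : V // u ≠ v} → ℝ × ℝ) (q : ℝ × ℝ) :
    extendP p' q v = q := by simp [extendP]

lemma extendP_ne {v : V} (p' : {u : V // u ≠ v} → ℝ × ℝ) (q : ℝ × ℝ) {u : V} (h : u ≠ v) :
    extendP p' q u = p' ⟨u, h⟩ := by simp [extendP, h]

lemma extendP_coe {v : V} (p' : {u : V // u ≠ v} → ℝ × ℝ) (q : ℝ × ℝ) :
    (fun x : {u : V // u ≠ v} => extendP p' q ↑x) = p' := by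
  funext x
  rw [extendP_ne p' q x.2]

lemma incident_form {G : SimpleGraph V} {v : V} {e : Sym2 V} (he : e ∈ edgeFS G) (hv : v ∈ e) :
    ∃ w ∈ nbrFS G v, e = s(v, w) := by
  induction e using Sym2.ind with
  | _ x y =>
    rw [Sym2.mem_iff] at hv
    rw [mem_edgeFS, SimpleGraph.mem_edgeSet] at he
    rcases hv with rfl | rfl
    · exact ⟨y, mem_nbrFS.2 he, rfl⟩
    · exact ⟨x, mem_nbrFS.2 he.symm, Sym2.eq_swap⟩

lemma nonincident_form {G : SimpleGraph V} {v : V} {e : Sym2 V} (he : e ∈ edgeFS G)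
    (hv : v ∉ e) :
    ∃ e' ∈ edgeFS (G.comap (Subtype.val : {u : V // u ≠ v} → V)), e = Sym2.map Subtype.val e' := by
  induction e using Sym2.ind with
  | _ x y =>
    have hx : x ≠ v := fun hh => hv (hh ▸ Sym2.mem_mk_left x y)
    have hy : y ≠ v := fun hh => hv (hh ▸ Sym2.mem_mk_right x y)
    exact ⟨s(⟨x, hx⟩, ⟨y, hy⟩), mem_edgeFS_del.2 he, rfl⟩

/-- Extension lemma: if the incident edge directions at `v` force zero coefficients,
independence extends. -/
lemma extend_indep (G : SimpleGraph V) (v : V) (p' : {u : V // u ≠ v} → ℝ × ℝ)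
    (hind : IndepOn p' (edgeFS (G.comap (Subtype.val : {u : V // u ≠ v} → V))))
    (q : ℝ × ℝ)
    (hq : ∀ g : V → ℝ, (∑ w ∈ nbrFS G v, g w • (q - extendP p' q w)) = 0 →
      ∀ w ∈ nbrFS G v, g w = 0) :
    IndepOn (extendP p' q) (edgeFS G) := by
  classical
  intro g hg
  set p := extendP p' q with hp
  -- incident coefficients vanish
  have hv0 : ∀ w ∈ nbrFS G v, g s(v, w) = 0 := by
    apply hq (fun w => g s(v, w))
    have h0 := congrFun hg v
    rw [Finset.sum_apply] at h0
    have := sum_eVec_apply G p g v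
    rw [Finset.sum_apply] at this
    rw [this] at h0
    simpa [hp] using h0
  -- restricted sum over deleted graph
  have hfun : ∑ e' ∈ edgeFS (G.comap (Subtype.val : {u : V // u ≠ v} → V)),
      (fun e' => g (Sym2.map Subtype.val e')) e' • eVec p' e' = 0 := by
    funext u
    rw [Finset.sum_apply, Pi.zero_apply]
    have h1 := restricted_sum G v p g hg u
    have h2 : (∑ w ∈ nbrFS G v, g s(v, w) • (if (u : V) = w then p w - p v else 0)) = 0 :=
      Finset.sum_eq_zero fun w hw => by rw [hv0 w hw, zero_smul]
    rw [h2, add_zero] at h1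
    rw [← extendP_coe p' q]
    simpa using h1
  have hall := hind _ hfun
  intro e he
  by_cases hve : v ∈ e
  · obtain ⟨w, hw, rfl⟩ := incident_form he hve
    exact hv0 w hw
  · obtain ⟨e', he', rfl⟩ := nonincident_form he hve
    exact hall e' he'

end Aux5
section Aux6
set_option linter.unusedSectionVars false
variable {V : Type*} [Fintype V] [DecidableEq V]

def det2 (x y : ℝ × ℝ) : ℝ := x.1 * y.2 - x.2 * y.1

def rot (x : ℝ × ℝ) : ℝ × ℝ := (-x.2, x.1)

lemma prod_ne_zero_iff {x : ℝ × ℝ} : x ≠ 0 ↔ x.1 ≠ 0 ∨ x.2 ≠ 0 := by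
  constructor
  · intro h
    by_contra hc
    push_neg at hc
    exact h (Prod.ext_iff.2 ⟨hc.1, hc.2⟩)
  · rintro (h | h) rfl <;> simp at h

lemma sumsq_pos {x : ℝ × ℝ} (h : x ≠ 0) : 0 < x.1 ^ 2 + x.2 ^ 2 := by
  rcases prod_ne_zero_iff.1 h with h1 | h1
  · have : 0 < x.1 ^ 2 := lt_of_le_of_ne (sq_nonneg _) (Ne.symm (pow_ne_zero _ h1))
    nlinarith [sq_nonneg x.2]
  · have : 0 < x.2 ^ 2 := lt_of_le_of_ne (sq_nonneg _) (Ne.symm (pow_ne_zero _ h1))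
    nlinarith [sq_nonneg x.1]

lemma deg2_solve {A B : ℝ × ℝ} (hAB : B - A ≠ 0) (α β : ℝ)
    (h : α • (A + rot (B - A) - A) + β • (A + rot (B - A) - B) = 0) : α = 0 ∧ β = 0 := by
  have e1 := congrArg Prod.fst h
  have e2 := congrArg Prod.snd h
  simp only [Prod.fst_add, Prod.snd_add, Prod.fst_sub, Prod.snd_sub, Prod.smul_fst,
    Prod.smul_snd, smul_eq_mul, Prod.fst_zero, Prod.snd_zero, rot] at e1 e2
  have hpos := sumsq_pos hAB
  rw [Prod.fst_sub, Prod.snd_sub] at hpos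
  have hβ : β * ((B.1 - A.1) ^ 2 + (B.2 - A.2) ^ 2) = 0 := by
    linear_combination (-(B.1 - A.1)) * e1 - (B.2 - A.2) * e2
  have hb0 : β = 0 := by
    rcases mul_eq_zero.1 hβ with h' | h'
    · exact h'
    · exact absurd h' (ne_of_gt hpos)
  subst hb0
  constructor
  · have ha1 : α * (B.2 - A.2) = 0 := by linear_combination -e1
    have ha2 : α * (B.1 - A.1) = 0 := by linear_combination e2
    rcases mul_eq_zero.1 ha1 with h' | h'
    · exact h'
    rcases mul_eq_zero.1 ha2 with h'' | h''
    · exact h''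
    · exfalso; rw [h', h''] at hpos; simp at hpos
  · rfl

end Aux6
section Aux7
set_option linter.unusedSectionVars false
variable {V : Type*} [Fintype V] [DecidableEq V]

/-- P1 : perturbing to make two chosen points distinct. -/
lemma indep_and_ne (G : SimpleGraph V) (p : V → ℝ × ℝ) (h : IndepOn p (edgeFS G))
    {a b : V} (hab : a ≠ b) :
    ∃ p2, IndepOn p2 (edgeFS G) ∧ p2 a ≠ p2 b := by
  by_cases hpa : p a ≠ p b
  · exact ⟨p, h, hpa⟩
  push_neg at hpa
  obtain ⟨t, ht, h2⟩ := exists_perturb G p h a (1, 0)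
  refine ⟨_, h2, ?_⟩
  rw [Function.update_self, Function.update_of_ne (Ne.symm hab), hpa]
  intro hc
  have h3 : t • ((1 : ℝ), (0 : ℝ)) = 0 := by
    have := congrArg (fun z => z - p b) hc
    simpa using this
  rw [Prod.ext_iff] at h3
  simp at h3
  exact ht h3

/-- P2 : perturbing `c` to make `det2 (p b - p a) (p c - p a)` nonzero,
keeping `a`, `b` in place. -/
lemma indep_and_det (G : SimpleGraph V) (p : V → ℝ × ℝ) (h : IndepOn p (edgeFS G))
    {a b c : V} (hab : p a ≠ p b) (hca : c ≠ a) (hcb : c ≠ b) :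
    ∃ p2, IndepOn p2 (edgeFS G) ∧ p2 a = p a ∧ p2 b = p b ∧
      det2 (p2 b - p2 a) (p2 c - p2 a) ≠ 0 := by
  by_cases hd : det2 (p b - p a) (p c - p a) ≠ 0
  · exact ⟨p, h, rfl, rfl, hd⟩
  push_neg at hd
  obtain ⟨t, ht, h2⟩ := exists_perturb G p h c (rot (p b - p a))
  refine ⟨_, h2, Function.update_of_ne (Ne.symm hca) _ _, Function.update_of_ne (Ne.symm hcb) _ _, ?_⟩
  rw [Function.update_of_ne (Ne.symm hca), Function.update_of_ne (Ne.symm hcb),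
    Function.update_self]
  have hn : p b - p a ≠ 0 := sub_ne_zero.2 (Ne.symm hab)
  have hpos := sumsq_pos hn
  intro hc
  apply ht
  have key : t * ((p b - p a).1 ^ 2 + (p b - p a).2 ^ 2) = 0 := by
    simp only [det2, rot, Prod.fst_add, Prod.snd_add, Prod.fst_sub, Prod.snd_sub,
      Prod.smul_fst, Prod.smul_snd, smul_eq_mul] at hc hd ⊢
    linear_combination hc - hd
  rcases mul_eq_zero.1 key with h' | h'
  · exact h'
  · exact absurd h' (ne_of_gt hpos)

end Aux7
section Aux8
set_option linter.unusedSectionVars false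
variable {V : Type*} [Fintype V] [DecidableEq V]

lemma extend_indep3 (G : SimpleGraph V) (v a b c : V)
    (ha : a ≠ v) (hb : b ≠ v) (hc : c ≠ v)
    (hab : a ≠ b) (hac : a ≠ c) (hbc : b ≠ c)
    (hnbr : nbrFS G v = {a, b, c})
    (hnadj : ¬ G.Adj a b)
    (p' : {u : V // u ≠ v} → ℝ × ℝ)
    (hind : IndepOn p' (edgeFS (G.comap (Subtype.val : {u : V // u ≠ v} → V) ⊔
      SimpleGraph.fromEdgeSet {s((⟨a, ha⟩ : {u : V // u ≠ v}), (⟨b, hb⟩ : {u : V // u ≠ v}))})))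
    (hdet : det2 (p' ⟨b, hb⟩ - p' ⟨a, ha⟩) (p' ⟨c, hc⟩ - p' ⟨a, ha⟩) ≠ 0) :
    IndepOn (extendP p' (p' ⟨a, ha⟩ + (1/2 : ℝ) • (p' ⟨b, hb⟩ - p' ⟨a, ha⟩))) (edgeFS G) := by
  classical
  set a' : {u : V // u ≠ v} := ⟨a, ha⟩ with ha'
  set b' : {u : V // u ≠ v} := ⟨b, hb⟩ with hb'
  set A := p' ⟨a, ha⟩ with hA
  set B := p' ⟨b, hb⟩ with hB
  set C := p' ⟨c, hc⟩ with hC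
  set q : ℝ × ℝ := A + (1/2 : ℝ) • (B - A) with hqdef
  set p := extendP p' q with hp
  have hn0 : B - A ≠ 0 := by
    intro h0
    apply hdet
    rw [h0]
    simp [det2]
  have hpa : p a = A := extendP_ne _ _ ha
  have hpb : p b = B := extendP_ne _ _ hb
  have hpc : p c = C := extendP_ne _ _ hc
  have hpv : p v = q := extendP_v _ _
  intro g hg
  set α := g s(v, a) with hα
  set β := g s(v, b) with hβ
  set γ := g s(v, c) with hγ
  -- step 1 : the equation at vertex v
  have h0 : α • (q - A) + (β • (q - B) + γ • (q - C)) = 0 := by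
    have h0 := congrFun hg v
    rw [Finset.sum_apply] at h0
    have hsa := sum_eVec_apply G p g v
    rw [Finset.sum_apply] at hsa
    rw [hsa, hnbr] at h0
    rw [Finset.sum_insert (by simp [hab, hac]), Finset.sum_insert (by simp [hbc]),
      Finset.sum_singleton, hpa, hpb, hpc, hpv] at h0
    exact h0
  have e1 := congrArg Prod.fst h0
  have e2 := congrArg Prod.snd h0
  simp only [Prod.fst_add, Prod.snd_add, Prod.fst_sub, Prod.snd_sub, Prod.smul_fst,
    Prod.smul_snd, smul_eq_mul, Prod.fst_zero, Prod.snd_zero, hqdef] at e1 e2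
  rw [show det2 (B - A) (C - A) ≠ 0 ↔
    (B.1 - A.1) * (C.2 - A.2) - (B.2 - A.2) * (C.1 - A.1) ≠ 0 by
      simp [det2]] at hdet
  have hγ0 : γ = 0 := by
    have key : γ * ((B.1 - A.1) * (C.2 - A.2) - (B.2 - A.2) * (C.1 - A.1)) = 0 := by
      linear_combination (B.2 - A.2) * e1 - (B.1 - A.1) * e2
    rcases mul_eq_zero.1 key with h' | h'
    · exact h'
    · exact absurd h' hdet
  rw [hγ0] at e1 e2
  have hαβ : α = β := by
    have hd1 : (α - β) * (B.1 - A.1) = 0 := by linear_combination 2 * e1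
    have hd2 : (α - β) * (B.2 - A.2) = 0 := by linear_combination 2 * e2
    rcases prod_ne_zero_iff.1 hn0 with hh | hh
    · rw [Prod.fst_sub] at hh
      rcases mul_eq_zero.1 hd1 with h' | h'
      · exact sub_eq_zero.1 h'
      · exact absurd h' hh
    · rw [Prod.snd_sub] at hh
      rcases mul_eq_zero.1 hd2 with h' | h'
      · exact sub_eq_zero.1 h'
      · exact absurd h' hh
  -- step 2 : transfer to the smaller graph
  have hedges : edgeFS (G.comap (Subtype.val : {u : V // u ≠ v} → V) ⊔
      SimpleGraph.fromEdgeSet {s(a', b')}) =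
      insert s(a', b') (edgeFS (G.comap (Subtype.val : {u : V // u ≠ v} → V))) := by
    ext e'
    rw [mem_edgeFS, Finset.mem_insert, mem_edgeFS, SimpleGraph.edgeSet_sup,
      SimpleGraph.edgeSet_fromEdgeSet]
    constructor
    · rintro (h' | ⟨h', -⟩)
      · exact Or.inr h'
      · exact Or.inl h'
    · rintro (h' | h')
      · refine Or.inr ⟨h', ?_⟩
        subst h'
        simp only [Set.mem_setOf_eq, Sym2.mem_diagSet, Sym2.mk_isDiag_iff]
        intro h''
        exact hab (congrArg Subtype.val h'')
      · exact Or.inl h'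
  have hnew_not : s(a', b') ∉ edgeFS (G.comap (Subtype.val : {u : V // u ≠ v} → V)) := by
    rw [mem_edgeFS, SimpleGraph.mem_edgeSet]
    exact hnadj
  set g' : Sym2 {u : V // u ≠ v} → ℝ :=
    fun e' => if e' = s(a', b') then α / 2 else g (Sym2.map Subtype.val e') with hg'def
  have hg' : ∑ e' ∈ edgeFS (G.comap (Subtype.val : {u : V // u ≠ v} → V) ⊔
      SimpleGraph.fromEdgeSet {s(a', b')}), g' e' • eVec p' e' = 0 := by
    rw [hedges, Finset.sum_insert hnew_not]
    funext u
    rw [Pi.add_apply, Finset.sum_apply, Pi.zero_apply]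
    have h1 := restricted_sum G v p g hg u
    rw [extendP_coe p' q] at h1
    -- identify the incident part with the new-edge contribution
    have hS2 : (g' s(a', b') • eVec p' s(a', b')) u =
        ∑ w ∈ nbrFS G v, g s(v, w) • (if (u : V) = w then p w - p v else 0) := by
      rw [hnbr, Finset.sum_insert (by simp [hab, hac]), Finset.sum_insert (by simp [hbc]),
        Finset.sum_singleton, ← hα, ← hβ, ← hγ, hγ0, hpa, hpb, hpc, hpv, zero_smul, add_zero]
      have hval : g' s(a', b') = α / 2 := by rw [hg'def]; simp
      rw [Pi.smul_apply, hval]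
      show (α / 2) • edgeVec p' a' b' u = _
      by_cases hua : u = a'
      · have huv : (u : V) = a := by rw [hua]
        have hub : ¬ (u : V) = b := by rw [huv]; exact hab
        rw [if_pos huv, if_neg hub, ← hαβ]
        subst hua
        rw [edgeVec_apply_fst]
        simp only [smul_zero, add_zero]
        show (α / 2) • (A - B) = α • (A - q)
        rw [hqdef]
        module
      · by_cases hub : u = b'
        · have huv : (u : V) = b := by rw [hub]
          have hua2 : ¬ (u : V) = a := by rw [huv]; exact fun h' => hab h'.symm
          rw [if_neg hua2, if_pos huv, ← hαβ]
          subst hub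
          rw [edgeVec_symm, edgeVec_apply_fst]
          simp only [smul_zero, zero_add]
          show (α / 2) • (B - A) = α • (B - q)
          rw [hqdef]
          module
        · have hua2 : ¬ (u : V) = a := fun h' => hua (Subtype.ext h')
          have hub2 : ¬ (u : V) = b := fun h' => hub (Subtype.ext h')
          rw [if_neg hua2, if_neg hub2, edgeVec_apply_of_ne p' hua hub]
          simp
    rw [hS2]
    have hrest : ∑ e' ∈ edgeFS (G.comap (Subtype.val : {u : V // u ≠ v} → V)),
        (g' e' • eVec p' e') u =
        ∑ e' ∈ edgeFS (G.comap (Subtype.val : {u : V // u ≠ v} → V)),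
        g (Sym2.map Subtype.val e') • eVec p' e' u := by
      apply Finset.sum_congr rfl
      intro e' he'
      have hne : e' ≠ s(a', b') := fun h' => hnew_not (h' ▸ he')
      have : g' e' = g (Sym2.map Subtype.val e') := by
        rw [hg'def]
        exact if_neg hne
      rw [Pi.smul_apply, this]
    rw [hrest, add_comm]
    exact h1
  have hall := hind g' hg'
  -- extract conclusions
  have hα0 : α = 0 := by
    have := hall s(a', b') (by rw [hedges]; exact Finset.mem_insert_self _ _)
    rw [hg'def] at this
    simp at this
    linarith [this]
  have hdel : ∀ e' ∈ edgeFS (G.comap (Subtype.val : {u : V // u ≠ v} → V)),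
      g (Sym2.map Subtype.val e') = 0 := by
    intro e' he'
    have hne : e' ≠ s(a', b') := fun h' => hnew_not (h' ▸ he')
    have := hall e' (by rw [hedges]; exact Finset.mem_insert_of_mem he')
    rw [hg'def] at this
    simp only [] at this
    rw [if_neg hne] at this
    exact this
  -- step 3 : conclude
  intro e he
  by_cases hve : v ∈ e
  · obtain ⟨w, hw, rfl⟩ := incident_form he hve
    rw [hnbr] at hw
    simp only [Finset.mem_insert, Finset.mem_singleton] at hw
    rcases hw with rfl | rfl | rfl
    · exact hα0
    · rw [← hβ, ← hαβ]; exact hα0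
    · exact hγ0
  · obtain ⟨e', he', rfl⟩ := nonincident_form he hve
    exact hdel e' he'

end Aux8
section Aux9
set_option linter.unusedSectionVars false
variable {V : Type*} [Fintype V] [DecidableEq V]

def K4Free (G : SimpleGraph V) : Prop :=
  ¬ ∃ a b c d : V, G.Adj a b ∧ G.Adj a c ∧ G.Adj a d ∧ G.Adj b c ∧ G.Adj b d ∧ G.Adj c d

lemma K4Free_del {G : SimpleGraph V} {v : V} (h : K4Free G) :
    K4Free (G.comap (Subtype.val : {u : V // u ≠ v} → V)) := by
  rintro ⟨a, b, c, d, h1, h2, h3, h4, h5, h6⟩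
  exact h ⟨↑a, ↑b, ↑c, ↑d, h1, h2, h3, h4, h5, h6⟩

lemma nbr_del_le {G : SimpleGraph V} {v : V} (u : {x : V // x ≠ v}) :
    (nbrFS (G.comap (Subtype.val : {u : V // u ≠ v} → V)) u).card ≤ (nbrFS G ↑u).card := by
  apply Finset.card_le_card_of_injOn (fun w => ↑w)
  · intro w hw
    rw [Finset.mem_coe, mem_nbrFS] at hw ⊢
    exact hw
  · intro w _ w' _ hww
    exact Subtype.ext hww

lemma nbr_del_le_sub {G : SimpleGraph V} {v : V} (u : {x : V // x ≠ v})
    (hadj : G.Adj ↑u v) (hd : (nbrFS G ↑u).card ≤ 3) :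
    (nbrFS (G.comap (Subtype.val : {u : V // u ≠ v} → V)) u).card ≤ 2 := by
  have h1 : (nbrFS (G.comap (Subtype.val : {u : V // u ≠ v} → V)) u).card ≤
      ((nbrFS G ↑u).erase v).card := by
    apply Finset.card_le_card_of_injOn (fun w => ↑w)
    · intro w hw
      rw [Finset.mem_coe, mem_nbrFS] at hw
      rw [Finset.mem_coe, Finset.mem_erase, mem_nbrFS]
      exact ⟨w.2, hw⟩
    · intro w _ w' _ hww
      exact Subtype.ext hww
  have h2 : ((nbrFS G ↑u).erase v).card = (nbrFS G ↑u).card - 1 :=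
    Finset.card_erase_of_mem (mem_nbrFS.2 hadj)
  omega

lemma card3 {x y z : V} (h1 : x ≠ y) (h2 : x ≠ z) (h3 : y ≠ z) :
    ({x, y, z} : Finset V).card = 3 := by
  rw [Finset.card_insert_of_notMem (by simp [h1, h2]),
    Finset.card_insert_of_notMem (by simp [h3]), Finset.card_singleton]

lemma nbr_eq_of_three {G : SimpleGraph V} (hdeg : ∀ u, (nbrFS G u).card ≤ 3) {u x y z : V}
    (h1 : G.Adj u x) (h2 : G.Adj u y) (h3 : G.Adj u z)
    (hxy : x ≠ y) (hxz : x ≠ z) (hyz : y ≠ z) :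
    nbrFS G u = {x, y, z} := by
  apply Finset.eq_of_subset_of_card_le ?_ ?_ |>.symm
  · intro w hw
    simp only [Finset.mem_insert, Finset.mem_singleton] at hw
    rcases hw with rfl | rfl | rfl
    · exact mem_nbrFS.2 h1
    · exact mem_nbrFS.2 h2
    · exact mem_nbrFS.2 h3
  · rw [card3 hxy hxz hyz]
    exact hdeg u

lemma bad_step {G : SimpleGraph V} (hdeg : ∀ u, (nbrFS G u).card ≤ 3) {v x y z : V}
    (hvx : G.Adj v x) (hvy : G.Adj v y) (hvz : G.Adj v z)
    (hxy : x ≠ y) (hxz : x ≠ z) (hyz : y ≠ z)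
    (hs : ∃ s t, s ≠ v ∧ t ≠ v ∧ s ≠ t ∧
      G.Adj x s ∧ G.Adj x t ∧ G.Adj y s ∧ G.Adj y t ∧ G.Adj s t) :
    ¬ G.Adj x z ∧ ¬ ∃ s t, s ≠ v ∧ t ≠ v ∧ s ≠ t ∧
      G.Adj x s ∧ G.Adj x t ∧ G.Adj z s ∧ G.Adj z t ∧ G.Adj s t := by
  obtain ⟨s, t, hsv, htv, hst, hxs, hxt, hys, hyt, hstadj⟩ := hs
  have hnbx : nbrFS G x = {v, s, t} :=
    nbr_eq_of_three hdeg hvx.symm hxs hxt (Ne.symm hsv) (Ne.symm htv) hst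
  have hnbs : nbrFS G s = {x, y, t} :=
    nbr_eq_of_three hdeg hxs.symm hys.symm hstadj hxy hxt.ne hyt.ne
  have hnbt : nbrFS G t = {x, y, s} :=
    nbr_eq_of_three hdeg hxt.symm hyt.symm hstadj.symm hxy hxs.ne hys.ne
  have hvns : ¬ G.Adj s v := by
    intro h'
    have hm : v ∈ nbrFS G s := mem_nbrFS.2 h'
    rw [hnbs] at hm
    simp only [Finset.mem_insert, Finset.mem_singleton] at hm
    rcases hm with rfl | rfl | rfl
    · exact hvx.ne rfl
    · exact hvy.ne rfl
    · exact htv rfl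
  have hvnt : ¬ G.Adj t v := by
    intro h'
    have hm : v ∈ nbrFS G t := mem_nbrFS.2 h'
    rw [hnbt] at hm
    simp only [Finset.mem_insert, Finset.mem_singleton] at hm
    rcases hm with rfl | rfl | rfl
    · exact hvx.ne rfl
    · exact hvy.ne rfl
    · exact hsv rfl
  have hzs : z ≠ s := by
    rintro rfl
    exact hvns hvz.symm
  have hzt : z ≠ t := by
    rintro rfl
    exact hvnt hvz.symm
  have hnadjxz : ¬ G.Adj x z := by
    intro h'
    have hm : z ∈ nbrFS G x := mem_nbrFS.2 h'
    rw [hnbx] at hm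
    simp only [Finset.mem_insert, Finset.mem_singleton] at hm
    rcases hm with rfl | rfl | rfl
    · exact hvz.ne rfl
    · exact hzs rfl
    · exact hzt rfl
  have hnadjzs : ¬ G.Adj z s := by
    intro h'
    have hm : z ∈ nbrFS G s := mem_nbrFS.2 h'.symm
    rw [hnbs] at hm
    simp only [Finset.mem_insert, Finset.mem_singleton] at hm
    rcases hm with rfl | rfl | rfl
    · exact hxz rfl
    · exact hyz rfl
    · exact hzt rfl
  have hnadjzt : ¬ G.Adj z t := by
    intro h'
    have hm : z ∈ nbrFS G t := mem_nbrFS.2 h'.symm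
    rw [hnbt] at hm
    simp only [Finset.mem_insert, Finset.mem_singleton] at hm
    rcases hm with rfl | rfl | rfl
    · exact hxz rfl
    · exact hyz rfl
    · exact hzs rfl
  refine ⟨hnadjxz, ?_⟩
  rintro ⟨s', t', hs'v, ht'v, hs't', hxs', hxt', hzs', hzt', hadj'⟩
  have hs'mem : s' ∈ ({v, s, t} : Finset V) := by
    rw [← hnbx]
    exact mem_nbrFS.2 hxs'
  simp only [Finset.mem_insert, Finset.mem_singleton] at hs'mem
  rcases hs'mem with rfl | rfl | rfl
  · exact hs'v rfl
  · exact hnadjzs hzs'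
  · exact hnadjzt hzs'

lemma insert_comm3 (a b c : V) : ({a, b, c} : Finset V) = {a, c, b} := by
  ext w
  simp only [Finset.mem_insert, Finset.mem_singleton]
  tauto

lemma insert_rot3 (a b c : V) : ({a, b, c} : Finset V) = {b, c, a} := by
  ext w
  simp only [Finset.mem_insert, Finset.mem_singleton]
  tauto

/-- choose a good pair among the three neighbours of a cubic vertex. -/
lemma goodpair {G : SimpleGraph V} (hK4 : K4Free G) (hdeg : ∀ u, (nbrFS G u).card ≤ 3)
    {v a b c : V} (hnbr : nbrFS G v = {a, b, c})
    (hab : a ≠ b) (hac : a ≠ c) (hbc : b ≠ c) :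
    ∃ x y z : V, nbrFS G v = {x, y, z} ∧ x ≠ y ∧ x ≠ z ∧ y ≠ z ∧ ¬ G.Adj x y ∧
      ¬ ∃ s t : V, s ≠ v ∧ t ≠ v ∧ s ≠ t ∧
        G.Adj x s ∧ G.Adj x t ∧ G.Adj y s ∧ G.Adj y t ∧ G.Adj s t := by
  have hva : G.Adj v a := mem_nbrFS.1 (by rw [hnbr]; simp)
  have hvb : G.Adj v b := mem_nbrFS.1 (by rw [hnbr]; simp)
  have hvc : G.Adj v c := mem_nbrFS.1 (by rw [hnbr]; simp)
  by_cases hnab : G.Adj a b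
  · by_cases hnac : G.Adj a c
    · by_cases hnbc : G.Adj b c
      · exact absurd ⟨v, a, b, c, hva, hvb, hvc, hnab, hnac, hnbc⟩ hK4
      · -- b, c nonadjacent
        by_cases hbad : ∃ s t, s ≠ v ∧ t ≠ v ∧ s ≠ t ∧
            G.Adj b s ∧ G.Adj b t ∧ G.Adj c s ∧ G.Adj c t ∧ G.Adj s t
        · obtain ⟨h1, -⟩ := bad_step hdeg hvb hvc hva hbc (Ne.symm hab) (Ne.symm hac) hbad
          exact absurd hnab (fun _ => h1 hnab.symm)
        · exact ⟨b, c, a, by rw [hnbr]; rw [insert_rot3], hbc, Ne.symm hab, Ne.symm hac,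
            hnbc, hbad⟩
    · -- a, c nonadjacent
      by_cases hbad : ∃ s t, s ≠ v ∧ t ≠ v ∧ s ≠ t ∧
          G.Adj a s ∧ G.Adj a t ∧ G.Adj c s ∧ G.Adj c t ∧ G.Adj s t
      · obtain ⟨h1, -⟩ := bad_step hdeg hva hvc hvb hac hab (Ne.symm hbc) hbad
        exact absurd hnab h1
      · exact ⟨a, c, b, by rw [hnbr]; rw [insert_comm3], hac, hab, Ne.symm hbc, hnac, hbad⟩
  · by_cases hbad : ∃ s t, s ≠ v ∧ t ≠ v ∧ s ≠ t ∧
        G.Adj a s ∧ G.Adj a t ∧ G.Adj b s ∧ G.Adj b t ∧ G.Adj s t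
    · obtain ⟨h1, h2⟩ := bad_step hdeg hva hvb hvc hab hac hbc hbad
      exact ⟨a, c, b, by rw [hnbr]; rw [insert_comm3], hac, hab, Ne.symm hbc, h1, h2⟩
    · exact ⟨a, b, c, hnbr, hab, hac, hbc, hnab, hbad⟩

end Aux9
section Aux10
set_option linter.unusedSectionVars false
variable {V : Type*} [Fintype V] [DecidableEq V]

lemma adj_sup_edge {W : Type*} {H : SimpleGraph W} {a b x y : W} (hab : a ≠ b) :
    (H ⊔ SimpleGraph.fromEdgeSet {s(a, b)}).Adj x y ↔
      H.Adj x y ∨ (x = a ∧ y = b) ∨ (x = b ∧ y = a) := by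
  rw [SimpleGraph.sup_adj, SimpleGraph.fromEdgeSet_adj]
  constructor
  · rintro (h | ⟨h1, h2⟩)
    · exact Or.inl h
    · rw [Set.mem_singleton_iff] at h1
      rcases Sym2.eq_iff.1 h1 with ⟨rfl, rfl⟩ | ⟨rfl, rfl⟩
      · exact Or.inr (Or.inl ⟨rfl, rfl⟩)
      · exact Or.inr (Or.inr ⟨rfl, rfl⟩)
  · rintro (h | ⟨rfl, rfl⟩ | ⟨rfl, rfl⟩)
    · exact Or.inl h
    · exact Or.inr ⟨rfl, hab⟩
    · exact Or.inr ⟨by rw [Sym2.eq_swap]; rfl, Ne.symm hab⟩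

lemma nbr_sup_edge_subset_a {W : Type*} [Fintype W] [DecidableEq W]
    {H : SimpleGraph W} {a b : W} (hab : a ≠ b) :
    nbrFS (H ⊔ SimpleGraph.fromEdgeSet {s(a, b)}) a ⊆ insert b (nbrFS H a) := by
  intro w hw
  rw [mem_nbrFS, adj_sup_edge hab] at hw
  rcases hw with h | ⟨-, rfl⟩ | ⟨h1, -⟩
  · exact Finset.mem_insert_of_mem (mem_nbrFS.2 h)
  · exact Finset.mem_insert_self _ _
  · exact absurd h1 hab

lemma nbr_sup_edge_eq {W : Type*} [Fintype W] [DecidableEq W]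
    {H : SimpleGraph W} {a b u : W} (hab : a ≠ b) (hua : u ≠ a) (hub : u ≠ b) :
    nbrFS (H ⊔ SimpleGraph.fromEdgeSet {s(a, b)}) u = nbrFS H u := by
  ext w
  rw [mem_nbrFS, mem_nbrFS, adj_sup_edge hab]
  constructor
  · rintro (h | ⟨rfl, -⟩ | ⟨rfl, -⟩)
    · exact h
    · exact absurd rfl hua
    · exact absurd rfl hub
  · exact fun h => Or.inl h

lemma K4Free_sup_edge {G : SimpleGraph V} {v a b : V} (ha : a ≠ v) (hb : b ≠ v) (hab : a ≠ b)
    (hK4 : K4Free G)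
    (hbad : ¬ ∃ s t : V, s ≠ v ∧ t ≠ v ∧ s ≠ t ∧
      G.Adj a s ∧ G.Adj a t ∧ G.Adj b s ∧ G.Adj b t ∧ G.Adj s t) :
    K4Free ((G.comap (Subtype.val : {u : V // u ≠ v} → V)) ⊔
      SimpleGraph.fromEdgeSet {s((⟨a, ha⟩ : {u : V // u ≠ v}), (⟨b, hb⟩ : {u : V // u ≠ v}))}) := by
  set a' : {u : V // u ≠ v} := ⟨a, ha⟩ with ha'
  set b' : {u : V // u ≠ v} := ⟨b, hb⟩ with hb'
  have hab' : a' ≠ b' := fun h => hab (congrArg Subtype.val h)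
  set Gd := G.comap (Subtype.val : {u : V // u ≠ v} → V) with hGd
  set G'' := Gd ⊔ SimpleGraph.fromEdgeSet {s(a', b')} with hG''
  have toG : ∀ {x y : {u : V // u ≠ v}}, G''.Adj x y → y ≠ a' → y ≠ b' → G.Adj ↑x ↑y := by
    intro x y h hya hyb
    rw [hG'', adj_sup_edge hab'] at h
    rcases h with h | ⟨-, h2⟩ | ⟨-, h2⟩
    · exact h
    · exact absurd h2 hyb
    · exact absurd h2 hya
  rintro ⟨x, y, z, w, h1, h2, h3, h4, h5, h6⟩
  have h1s := h1.symm
  have h2s := h2.symm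
  have h3s := h3.symm
  have h4s := h4.symm
  have h5s := h5.symm
  have h6s := h6.symm
  set S : Finset {u : V // u ≠ v} := {x, y, z, w} with hS
  have hpair : ∀ s₁ ∈ S, ∀ t₁ ∈ S, s₁ ≠ t₁ → G''.Adj s₁ t₁ := by
    intro s₁ hs₁ t₁ ht₁ hne
    rw [hS] at hs₁ ht₁
    simp only [Finset.mem_insert, Finset.mem_singleton] at hs₁ ht₁
    rcases hs₁ with rfl | rfl | rfl | rfl <;> rcases ht₁ with rfl | rfl | rfl | rfl <;>
      first | exact absurd rfl hne | assumption
  by_cases hmem : a' ∈ S ∧ b' ∈ S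
  · obtain ⟨haS, hbS⟩ := hmem
    have hS4 : S.card = 4 := by
      rw [hS, Finset.card_insert_of_notMem (by simp [h1.ne, h2.ne, h3.ne]),
        Finset.card_insert_of_notMem (by simp [h4.ne, h5.ne]),
        Finset.card_insert_of_notMem (by simp [h6.ne]), Finset.card_singleton]
    have hT2 : ((S.erase a').erase b').card = 2 := by
      rw [Finset.card_erase_of_mem (Finset.mem_erase.2 ⟨Ne.symm hab', hbS⟩),
        Finset.card_erase_of_mem haS, hS4]
    obtain ⟨s₁, t₁, hst, hT⟩ := Finset.card_eq_two.1 hT2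
    have hs₁T : s₁ ∈ (S.erase a').erase b' := by rw [hT]; simp
    have ht₁T : t₁ ∈ (S.erase a').erase b' := by rw [hT]; simp
    rw [Finset.mem_erase, Finset.mem_erase] at hs₁T ht₁T
    obtain ⟨hs₁b, hs₁a, hs₁S⟩ := hs₁T
    obtain ⟨ht₁b, ht₁a, ht₁S⟩ := ht₁T
    apply hbad
    refine ⟨↑s₁, ↑t₁, s₁.2, t₁.2, fun h => hst (Subtype.ext h), ?_, ?_, ?_, ?_, ?_⟩
    · exact toG (hpair a' haS s₁ hs₁S (Ne.symm hs₁a)) hs₁a hs₁b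
    · exact toG (hpair a' haS t₁ ht₁S (Ne.symm ht₁a)) ht₁a ht₁b
    · exact toG (hpair b' hbS s₁ hs₁S (Ne.symm hs₁b)) hs₁a hs₁b
    · exact toG (hpair b' hbS t₁ ht₁S (Ne.symm ht₁b)) ht₁a ht₁b
    · exact toG (hpair s₁ hs₁S t₁ ht₁S hst) ht₁a ht₁b
  · have hnotnew : ∀ {x₁ y₁ : {u : V // u ≠ v}}, x₁ ∈ S → y₁ ∈ S → G''.Adj x₁ y₁ →
        G.Adj ↑x₁ ↑y₁ := by
      intro x₁ y₁ hx₁ hy₁ h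
      rw [hG'', adj_sup_edge hab'] at h
      rcases h with h | ⟨rfl, rfl⟩ | ⟨rfl, rfl⟩
      · exact h
      · exact absurd ⟨hx₁, hy₁⟩ hmem
      · exact absurd ⟨hy₁, hx₁⟩ hmem
    have hxS : x ∈ S := by rw [hS]; simp
    have hyS : y ∈ S := by rw [hS]; simp
    have hzS : z ∈ S := by rw [hS]; simp
    have hwS : w ∈ S := by rw [hS]; simp
    exact hK4 ⟨↑x, ↑y, ↑z, ↑w, hnotnew hxS hyS h1, hnotnew hxS hzS h2, hnotnew hxS hwS h3,
      hnotnew hyS hzS h4, hnotnew hyS hwS h5, hnotnew hzS hwS h6⟩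

lemma deg_sup_edge_le {G : SimpleGraph V} {v a b : V} (ha : a ≠ v) (hb : b ≠ v) (hab : a ≠ b)
    (hadja : G.Adj a v) (hadjb : G.Adj b v) (hdeg : ∀ u, (nbrFS G u).card ≤ 3)
    (u : {u : V // u ≠ v}) :
    (nbrFS ((G.comap (Subtype.val : {u : V // u ≠ v} → V)) ⊔
      SimpleGraph.fromEdgeSet {s((⟨a, ha⟩ : {u : V // u ≠ v}), (⟨b, hb⟩ : {u : V // u ≠ v}))})
      u).card ≤ 3 := by
  have hab' : (⟨a, ha⟩ : {u : V // u ≠ v}) ≠ ⟨b, hb⟩ := fun h => hab (congrArg Subtype.val h)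
  by_cases hua : u = (⟨a, ha⟩ : {u : V // u ≠ v})
  · have h1 : nbrFS ((G.comap (Subtype.val : {u : V // u ≠ v} → V)) ⊔
        SimpleGraph.fromEdgeSet {s((⟨a, ha⟩ : {u : V // u ≠ v}), ⟨b, hb⟩)}) u ⊆
        insert (⟨b, hb⟩ : {u : V // u ≠ v})
          (nbrFS (G.comap (Subtype.val : {u : V // u ≠ v} → V)) ⟨a, ha⟩) := by
      rw [hua]
      exact nbr_sup_edge_subset_a hab'
    have h2 := nbr_del_le_sub (G := G) (v := v) ⟨a, ha⟩ hadja (hdeg a)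
    have h3 := Finset.card_le_card h1
    have h4 := Finset.card_insert_le (⟨b, hb⟩ : {u : V // u ≠ v})
      (nbrFS (G.comap (Subtype.val : {u : V // u ≠ v} → V)) ⟨a, ha⟩)
    omega
  · by_cases hub : u = (⟨b, hb⟩ : {u : V // u ≠ v})
    · have hswap : SimpleGraph.fromEdgeSet
          {s((⟨a, ha⟩ : {u : V // u ≠ v}), ⟨b, hb⟩)} =
          SimpleGraph.fromEdgeSet {s((⟨b, hb⟩ : {u : V // u ≠ v}), ⟨a, ha⟩)} := by
        rw [Sym2.eq_swap]
      rw [hswap]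
      have h1 : nbrFS ((G.comap (Subtype.val : {u : V // u ≠ v} → V)) ⊔
          SimpleGraph.fromEdgeSet {s((⟨b, hb⟩ : {u : V // u ≠ v}), ⟨a, ha⟩)}) u ⊆
          insert (⟨a, ha⟩ : {u : V // u ≠ v})
            (nbrFS (G.comap (Subtype.val : {u : V // u ≠ v} → V)) ⟨b, hb⟩) := by
        rw [hub]
        exact nbr_sup_edge_subset_a (Ne.symm hab')
      have h2 := nbr_del_le_sub (G := G) (v := v) ⟨b, hb⟩ hadjb (hdeg b)
      have h3 := Finset.card_le_card h1
      have h4 := Finset.card_insert_le (⟨a, ha⟩ : {u : V // u ≠ v})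
        (nbrFS (G.comap (Subtype.val : {u : V // u ≠ v} → V)) ⟨b, hb⟩)
      omega
    · rw [nbr_sup_edge_eq hab' hua hub]
      exact le_trans (nbr_del_le u) (hdeg ↑u)

end Aux10
section Aux11
set_option linter.unusedSectionVars false
universe u

lemma card_subtype_ne {V : Type u} [Fintype V] [DecidableEq V] (v : V) :
    Fintype.card {u : V // u ≠ v} = Fintype.card V - 1 := by
  rw [Fintype.card_subtype_compl (· = v), Fintype.card_subtype_eq]

theorem exists_indepOn (n : ℕ) : ∀ (V : Type u) [Fintype V] [DecidableEq V]
    (G : SimpleGraph V), Fintype.card V ≤ n → (∀ u, (nbrFS G u).card ≤ 3) → K4Free G →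
    ∃ p : V → ℝ × ℝ, IndepOn p (edgeFS G) := by
  induction n with
  | zero =>
    intro V _ _ G hcard _ _
    haveI : IsEmpty V := Fintype.card_eq_zero_iff.1 (le_antisymm hcard (Nat.zero_le _))
    refine ⟨fun _ => 0, ?_⟩
    intro g _ e _
    exfalso
    induction e using Sym2.ind with
    | _ i j => exact isEmptyElim i
  | succ n IH =>
    intro V _ _ G hcard hdeg hK4
    by_cases hsm : Fintype.card V ≤ n
    · exact IH V G hsm hdeg hK4
    by_cases hlow : ∃ v, (nbrFS G v).card ≤ 2
    · -- CASE A : delete a vertex of degree ≤ 2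
      obtain ⟨v, hv⟩ := hlow
      have hcard' : Fintype.card {u : V // u ≠ v} ≤ n := by
        rw [card_subtype_ne v]
        omega
      have hdeg' : ∀ u', (nbrFS (G.comap (Subtype.val : {u : V // u ≠ v} → V)) u').card ≤ 3 :=
        fun u' => le_trans (nbr_del_le u') (hdeg ↑u')
      obtain ⟨p', hp'⟩ := IH {u : V // u ≠ v} (G.comap Subtype.val) hcard' hdeg' (K4Free_del hK4)
      by_cases h0 : (nbrFS G v).card = 0
      · have hnbr : nbrFS G v = ∅ := Finset.card_eq_zero.1 h0
        refine ⟨extendP p' 0, extend_indep G v p' hp' 0 ?_⟩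
        intro g _ w hw
        rw [hnbr] at hw
        simp at hw
      · by_cases h1 : (nbrFS G v).card = 1
        · obtain ⟨a, hnbr⟩ := Finset.card_eq_one.1 h1
          have hva : G.Adj v a := mem_nbrFS.1 (by rw [hnbr]; simp)
          have ha : a ≠ v := hva.ne'
          refine ⟨extendP p' (p' ⟨a, ha⟩ + (1, 0)),
            extend_indep G v p' hp' (p' ⟨a, ha⟩ + (1, 0)) ?_⟩
          intro g hsum w hw
          rw [hnbr, Finset.mem_singleton] at hw
          subst hw
          rw [hnbr, Finset.sum_singleton, extendP_ne p' _ ha, add_sub_cancel_left] at hsum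
          rcases smul_eq_zero.1 hsum with h' | h'
          · exact h'
          · exfalso
            rw [Prod.ext_iff] at h'
            simp at h'
        · have h2 : (nbrFS G v).card = 2 := by omega
          obtain ⟨a, b, hab, hnbr⟩ := Finset.card_eq_two.1 h2
          have hva : G.Adj v a := mem_nbrFS.1 (by rw [hnbr]; simp)
          have hvb : G.Adj v b := mem_nbrFS.1 (by rw [hnbr]; simp)
          have ha : a ≠ v := hva.ne'
          have hb : b ≠ v := hvb.ne'
          have hab' : (⟨a, ha⟩ : {u : V // u ≠ v}) ≠ ⟨b, hb⟩ :=
            fun h => hab (congrArg Subtype.val h)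
          obtain ⟨p2, hp2, hne⟩ := indep_and_ne (G.comap Subtype.val) p' hp' hab'
          set A := p2 ⟨a, ha⟩ with hA
          set B := p2 ⟨b, hb⟩ with hB
          set q : ℝ × ℝ := A + rot (B - A) with hq
          refine ⟨extendP p2 q, extend_indep G v p2 hp2 q ?_⟩
          intro g hsum w hw
          rw [hnbr, Finset.sum_insert (by simp [hab]), Finset.sum_singleton,
            extendP_ne p2 _ ha, extendP_ne p2 _ hb] at hsum
          have hBA : B - A ≠ 0 := sub_ne_zero.2 (Ne.symm hne)
          obtain ⟨ha0, hb0⟩ := deg2_solve hBA (g a) (g b) hsum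
          rw [hnbr, Finset.mem_insert, Finset.mem_singleton] at hw
          rcases hw with rfl | rfl
          · exact ha0
          · exact hb0
    · -- CASE B : all degrees equal 3
      push_neg at hlow
      have hall3 : ∀ u, (nbrFS G u).card = 3 := fun u => le_antisymm (hdeg u) (hlow u)
      haveI : Nonempty V := Fintype.card_pos_iff.1 (by omega)
      set v : V := Classical.arbitrary V with hvdef
      obtain ⟨a, b, c, hab, hac, hbc, hnbr⟩ := Finset.card_eq_three.1 (hall3 v)
      obtain ⟨x, y, z, hnbr', hxy, hxz, hyz, hnadj, hnbad⟩ :=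
        goodpair hK4 hdeg hnbr hab hac hbc
      have hvx : G.Adj v x := mem_nbrFS.1 (by rw [hnbr']; simp)
      have hvy : G.Adj v y := mem_nbrFS.1 (by rw [hnbr']; simp)
      have hvz : G.Adj v z := mem_nbrFS.1 (by rw [hnbr']; simp)
      have hx : x ≠ v := hvx.ne'
      have hy : y ≠ v := hvy.ne'
      have hz : z ≠ v := hvz.ne'
      have hcard' : Fintype.card {u : V // u ≠ v} ≤ n := by
        rw [card_subtype_ne v]
        omega
      have hxy' : (⟨x, hx⟩ : {u : V // u ≠ v}) ≠ ⟨y, hy⟩ :=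
        fun h => hxy (congrArg Subtype.val h)
      obtain ⟨p', hp'⟩ := IH {u : V // u ≠ v}
        ((G.comap (Subtype.val : {u : V // u ≠ v} → V)) ⊔
          SimpleGraph.fromEdgeSet {s((⟨x, hx⟩ : {u : V // u ≠ v}), ⟨y, hy⟩)})
        hcard' (deg_sup_edge_le hx hy hxy hvx.symm hvy.symm hdeg)
        (K4Free_sup_edge hx hy hxy hK4 hnbad)
      have hedge : s((⟨x, hx⟩ : {u : V // u ≠ v}), ⟨y, hy⟩) ∈
          edgeFS ((G.comap (Subtype.val : {u : V // u ≠ v} → V)) ⊔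
            SimpleGraph.fromEdgeSet {s((⟨x, hx⟩ : {u : V // u ≠ v}), ⟨y, hy⟩)}) := by
        rw [mem_edgeFS, SimpleGraph.mem_edgeSet, adj_sup_edge hxy']
        exact Or.inr (Or.inl ⟨rfl, rfl⟩)
      have hpxy := ne_of_indepOn hp' hxy' hedge
      have hzx' : (⟨z, hz⟩ : {u : V // u ≠ v}) ≠ ⟨x, hx⟩ :=
        fun h => hxz (congrArg Subtype.val h).symm
      have hzy' : (⟨z, hz⟩ : {u : V // u ≠ v}) ≠ ⟨y, hy⟩ :=
        fun h => hyz (congrArg Subtype.val h).symm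
      obtain ⟨p2, hp2, -, -, hdet2⟩ := indep_and_det _ p' hp' hpxy hzx' hzy'
      exact ⟨_, extend_indep3 G v x y z hx hy hz hxy hxz hyz hnbr' hnadj p2 hp2 hdet2⟩

end Aux11
section Aux12
set_option linter.unusedSectionVars false
variable {V : Type*} [Fintype V] [DecidableEq V]

lemma edgeVecs_image (p : V → ℝ × ℝ) (G : SimpleGraph V) :
    edgeVecs p G.edgeSet = eVec p '' G.edgeSet := by
  ext f
  constructor
  · rintro ⟨i, j, hm, rfl⟩
    exact ⟨s(i, j), hm, rfl⟩
  · rintro ⟨e, he, rfl⟩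
    induction e using Sym2.ind with
    | _ i j => exact ⟨i, j, he, rfl⟩

lemma rankOf_eq (p : V → ℝ × ℝ) (G : SimpleGraph V) (h : IndepOn p (edgeFS G)) :
    rankOf p G.edgeSet = G.edgeSet.ncard := by
  haveI : Fintype G.edgeSet := G.edgeSet.toFinite.fintype
  have hli : LinearIndependent ℝ (fun e : G.edgeSet => eVec p (e : Sym2 V)) :=
    (indepOn_iff p G).1 h
  rw [rankOf, edgeVecs_image, Set.image_eq_range, finrank_span_eq_card hli,
    Set.ncard_eq_toFinset_card', Set.toFinset_card]

lemma rankOf_le (p : V → ℝ × ℝ) (G : SimpleGraph V) :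
    rankOf p G.edgeSet ≤ G.edgeSet.ncard := by
  classical
  have himg : edgeVecs p G.edgeSet = (((edgeFS G).image (eVec p) : Finset (V → ℝ × ℝ)) :
      Set (V → ℝ × ℝ)) := by
    rw [Finset.coe_image, edgeVecs_image]
    exact congrArg (fun s => eVec p '' s) (Set.Finite.coe_toFinset _).symm
  rw [rankOf, himg]
  refine le_trans (finrank_span_finset_le_card _) (le_trans Finset.card_image_le ?_)
  rw [Set.ncard_eq_toFinset_card G.edgeSet G.edgeSet.toFinite]
  exact le_rfl

lemma K4Free_of_connected {G : SimpleGraph V} (hconn : G.Connected)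
    (hreg : ∀ u, (nbrFS G u).card = 3) (hcard : 4 < Fintype.card V) : K4Free G := by
  rintro ⟨a, b, c, d, h1, h2, h3, h4, h5, h6⟩
  have hdeg : ∀ u, (nbrFS G u).card ≤ 3 := fun u => (hreg u).le
  have hnba : nbrFS G a = {b, c, d} := nbr_eq_of_three hdeg h1 h2 h3 h4.ne h5.ne h6.ne
  have hnbb : nbrFS G b = {a, c, d} := nbr_eq_of_three hdeg h1.symm h4 h5 h2.ne h3.ne h6.ne
  have hnbc : nbrFS G c = {a, b, d} := nbr_eq_of_three hdeg h2.symm h4.symm h6 h1.ne h3.ne h5.ne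
  have hnbd : nbrFS G d = {a, b, c} :=
    nbr_eq_of_three hdeg h3.symm h5.symm h6.symm h1.ne h2.ne h4.ne
  have hclosed : ∀ u ∈ ({a, b, c, d} : Finset V), ∀ w, G.Adj u w →
      w ∈ ({a, b, c, d} : Finset V) := by
    intro u hu w hw
    have hm := mem_nbrFS.2 hw
    simp only [Finset.mem_insert, Finset.mem_singleton] at hu ⊢
    rcases hu with rfl | rfl | rfl | rfl
    · rw [hnba] at hm
      simp only [Finset.mem_insert, Finset.mem_singleton] at hm
      tauto
    · rw [hnbb] at hm
      simp only [Finset.mem_insert, Finset.mem_singleton] at hm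
      tauto
    · rw [hnbc] at hm
      simp only [Finset.mem_insert, Finset.mem_singleton] at hm
      tauto
    · rw [hnbd] at hm
      simp only [Finset.mem_insert, Finset.mem_singleton] at hm
      tauto
  have key : ∀ (x u' : V) (w : G.Walk x u'), x ∈ ({a, b, c, d} : Finset V) →
      u' ∈ ({a, b, c, d} : Finset V) := by
    intro x u' w
    induction w with
    | nil => exact id
    | cons hadj w ih => intro hx; exact ih (hclosed _ hx _ hadj)
  have hall : ∀ u, u ∈ ({a, b, c, d} : Finset V) := by
    intro u
    obtain ⟨w⟩ := hconn.preconnected a u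
    exact key a u w (by simp)
  have hle : Fintype.card V ≤ 4 := by
    have h1' : (Finset.univ : Finset V).card ≤ ({a, b, c, d} : Finset V).card :=
      Finset.card_le_card (fun u _ => hall u)
    have h2' : ({a, b, c, d} : Finset V).card ≤ 4 := by
      have g1 := Finset.card_insert_le a ({b, c, d} : Finset V)
      have g2 := Finset.card_insert_le b ({c, d} : Finset V)
      have g3 := Finset.card_insert_le c ({d} : Finset V)
      have g4 : ({d} : Finset V).card = 1 := Finset.card_singleton d
      omega
    rw [Finset.card_univ] at h1'
    omega
  omega

end Aux12
/-- If `G` is a finite simple connected 3-regular graph with more than 4 vertices, then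
`r(G) = |E|` (equivalently `s(G) = 0`). -/
theorem genRank_eq_card_edges_of_three_regular {V : Type*} [Fintype V] [DecidableEq V]
    (G : SimpleGraph V) [DecidableRel G.Adj]
    (hconn : G.Connected) (hreg : G.IsRegularOfDegree 3)
    (hcard : 4 < Fintype.card V) :
    genRank G = G.edgeSet.ncard := by
  classical
  have hreg3 : ∀ u, (nbrFS G u).card = 3 := by
    intro u
    have h : nbrFS G u = G.neighborFinset u := by
      ext w
      rw [mem_nbrFS, SimpleGraph.mem_neighborFinset]
    rw [h]
    exact hreg u
  obtain ⟨p0, hp0⟩ := exists_indepOn (Fintype.card V) V G le_rfl (fun u => (hreg3 u).le)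
    (K4Free_of_connected hconn hreg3 hcard)
  have hub : ∀ p : V → ℝ × ℝ, rankOf p G.edgeSet ≤ G.edgeSet.ncard := fun p => rankOf_le p G
  have hbdd : BddAbove (Set.range fun p : V → ℝ × ℝ => rankOf p G.edgeSet) := by
    refine ⟨G.edgeSet.ncard, ?_⟩
    rintro r ⟨p, rfl⟩
    exact hub p
  apply le_antisymm
  · exact ciSup_le hub
  · have heq := rankOf_eq p0 G hp0
    rw [genRank, genRankSet, ← heq]
    exact le_ciSup hbdd p0
end

section
/- Let V be a finite set with |V| ≥ 2 and let p : V → ℝ² be in general position. Then the dimension of the linear span of the edge vectors of the complete graph on V, i.e. of {v_{ij}(p) : i,j ∈ V, i ≠ j}, equals 2·|V| − 3. -/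
namespace EdgeRank

/-- 2D cross product / determinant. -/
def dd (a b : ℝ × ℝ) : ℝ := a.1 * b.2 - a.2 * b.1

lemma dd_zero_right (a : ℝ × ℝ) : dd a 0 = 0 := by simp [dd]

lemma cramer {u w : ℝ × ℝ} (h : dd u w ≠ 0) (z : ℝ × ℝ) :
    ∃ a b : ℝ, z = a • u + b • w := by
  refine ⟨dd z w / dd u w, dd u z / dd u w, ?_⟩
  have h' : u.1 * w.2 - u.2 * w.1 ≠ 0 := h
  have h'' : w.2 * u.1 - w.1 * u.2 ≠ 0 := fun h0 => h' (by linarith)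
  apply Prod.ext <;> simp only [dd, Prod.fst_add, Prod.snd_add, Prod.smul_fst, Prod.smul_snd,
    smul_eq_mul] <;> field_simp <;> ring

lemma collinear_of_dd {x y z : ℝ × ℝ} (h : dd (y - x) (z - x) = 0) :
    Collinear ℝ ({x, y, z} : Set (ℝ × ℝ)) := by
  rcases eq_or_ne y x with heq | hyx
  · have hxz : ({x, y, z} : Set (ℝ × ℝ)) = {x, z} := by rw [heq]; simp
    rw [hxz]; exact collinear_pair ℝ x z
  · have hu : y - x ≠ 0 := sub_ne_zero.mpr hyx
    have hex : ∃ c : ℝ, z - x = c • (y - x) := by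
      set u := y - x with hud
      set w := z - x with hwd
      have h1 : u.1 * w.2 = u.2 * w.1 := by
        have h' : u.1 * w.2 - u.2 * w.1 = 0 := h
        linarith
      rcases eq_or_ne u.1 0 with h2 | h2
      · have hu2 : u.2 ≠ 0 := fun h3 => hu (by apply Prod.ext <;> simp [h2, h3])
        have hw1 : w.1 = 0 := by
          have h5 := h1; rw [h2, zero_mul] at h5
          rcases mul_eq_zero.mp h5.symm with h4 | h4
          · exact absurd h4 hu2
          · exact h4
        refine ⟨w.2 / u.2, ?_⟩
        apply Prod.ext
        · simp [h2, hw1]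
        · simp only [Prod.smul_snd, smul_eq_mul]; field_simp
      · refine ⟨w.1 / u.1, ?_⟩
        apply Prod.ext
        · simp only [Prod.smul_fst, smul_eq_mul]; field_simp
        · simp only [Prod.smul_snd, smul_eq_mul]; field_simp
          linear_combination h1
    rcases hex with ⟨c, hc⟩
    apply collinear_iff_of_mem (Set.mem_insert x {y, z}) |>.mpr
    refine ⟨y - x, ?_⟩
    intro q hq
    rcases hq with rfl | rfl | rfl
    · exact ⟨0, by simp⟩
    · exact ⟨1, by simp⟩
    · exact ⟨c, by rw [← hc]; simp⟩

lemma dd_ne_of_not_collinear {x y z : ℝ × ℝ}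
    (h : ¬ Collinear ℝ ({x, y, z} : Set (ℝ × ℝ))) : dd (y - x) (z - x) ≠ 0 :=
  fun h0 => h (collinear_of_dd h0)

variable {V : Type*} [Fintype V] [DecidableEq V]

/-- The rigidity pairing map: sum and angular momentum. -/
def Phi (p : V → ℝ × ℝ) : (V → ℝ × ℝ) →ₗ[ℝ] (ℝ × ℝ) × ℝ where
  toFun f := (∑ v, f v, ∑ v, dd (p v) (f v))
  map_add' f g := by
    have h2 : ∀ v, dd (p v) (f v + g v) = dd (p v) (f v) + dd (p v) (g v) := by
      intro v; simp only [dd, Prod.fst_add, Prod.snd_add]; ring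
    simp [Prod.ext_iff, Finset.sum_add_distrib, h2]
  map_smul' r f := by
    have h2 : ∀ v, dd (p v) (r • f v) = r * dd (p v) (f v) := by
      intro v; simp only [dd, Prod.smul_fst, Prod.smul_snd, smul_eq_mul]; ring
    simp [Prod.ext_iff, h2, Finset.mul_sum, Finset.smul_sum, smul_eq_mul]

lemma edgeVec_eq_single {p : V → ℝ × ℝ} {i j : V} (hij : i ≠ j) :
    edgeVec p i j = Pi.single i (p i - p j) + Pi.single j (p j - p i) := by
  funext v
  simp only [edgeVec, Pi.add_apply]
  by_cases hvi : v = i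
  · subst hvi
    rw [if_pos rfl, Pi.single_eq_same, Pi.single_eq_of_ne hij]
    simp
  · rw [if_neg hvi, Pi.single_eq_of_ne hvi]
    by_cases hvj : v = j
    · subst hvj; rw [if_pos rfl, Pi.single_eq_same]; simp
    · rw [if_neg hvj, Pi.single_eq_of_ne hvj]; simp

lemma Phi_single (p : V → ℝ × ℝ) (v : V) (a : ℝ × ℝ) :
    Phi p (Pi.single v a) = (a, dd (p v) a) := by
  unfold Phi
  simp only [LinearMap.coe_mk, AddHom.coe_mk]
  congr 1
  · simp [Finset.sum_pi_single']
  · rw [Finset.sum_eq_single v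
      (fun u _ huv => by rw [Pi.single_eq_of_ne huv, dd_zero_right])
      (fun h => absurd (Finset.mem_univ v) h)]
    simp

lemma Phi_edgeVec (p : V → ℝ × ℝ) {i j : V} (hij : i ≠ j) :
    Phi p (edgeVec p i j) = 0 := by
  rw [edgeVec_eq_single hij, map_add, Phi_single, Phi_single]
  have : dd (p i) (p i - p j) + dd (p j) (p j - p i) = 0 := by simp [dd]; ring
  apply Prod.ext
  · simp
  · simpa using this

end EdgeRank

namespace EdgeRank

universe u

variable {V : Type*} [Fintype V] [DecidableEq V]

lemma exists_smul_of_dd_eq_zero {u w : ℝ × ℝ} (hu : u ≠ 0) (h : dd u w = 0) :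
    ∃ c : ℝ, w = c • u := by
  have h1 : u.1 * w.2 = u.2 * w.1 := by
    have h' : u.1 * w.2 - u.2 * w.1 = 0 := h
    linarith
  rcases eq_or_ne u.1 0 with h2 | h2
  · have hu2 : u.2 ≠ 0 := fun h3 => hu (by apply Prod.ext <;> simp [h2, h3])
    have hw1 : w.1 = 0 := by
      have h5 := h1; rw [h2, zero_mul] at h5
      rcases mul_eq_zero.mp h5.symm with h4 | h4
      · exact absurd h4 hu2
      · exact h4
    refine ⟨w.2 / u.2, ?_⟩
    apply Prod.ext
    · simp [h2, hw1]
    · simp only [Prod.smul_snd, smul_eq_mul]; field_simp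
  · refine ⟨w.1 / u.1, ?_⟩
    apply Prod.ext
    · simp only [Prod.smul_fst, smul_eq_mul]; field_simp
    · simp only [Prod.smul_snd, smul_eq_mul]; field_simp
      linear_combination h1

lemma dd_neg_neg (a b : ℝ × ℝ) : dd (-a) (-b) = dd a b := by simp [dd]

/-- Extension by zero from the subtype `{v // v ≠ v0}`. -/
def extMap (v0 : V) : ({v : V // v ≠ v0} → ℝ × ℝ) →ₗ[ℝ] (V → ℝ × ℝ) where
  toFun g := fun v => if h : v = v0 then 0 else g ⟨v, h⟩
  map_add' g h := by funext v; by_cases hv : v = v0 <;> simp [hv]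
  map_smul' r g := by funext v; by_cases hv : v = v0 <;> simp [hv]

lemma extMap_edgeVec (v0 : V) (p : V → ℝ × ℝ) (i j : {v : V // v ≠ v0}) :
    extMap v0 (edgeVec (fun v : {v : V // v ≠ v0} => p ↑v) i j) = edgeVec p ↑i ↑j := by
  funext v
  simp only [extMap, LinearMap.coe_mk, AddHom.coe_mk]
  by_cases hv : v = v0
  · rw [dif_pos hv]
    subst hv
    rw [edgeVec, if_neg (Ne.symm i.2), if_neg (Ne.symm j.2)]
  · rw [dif_neg hv]
    by_cases h1 : v = ↑i
    · rw [edgeVec, edgeVec]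
      simp only [if_pos (Subtype.ext h1 : (⟨v, hv⟩ : {v : V // v ≠ v0}) = i), if_pos h1]
    · rw [edgeVec, edgeVec]
      rw [if_neg (fun h => h1 (congrArg Subtype.val h)), if_neg h1]
      by_cases h2 : v = ↑j
      · rw [if_pos (Subtype.ext h2 : (⟨v, hv⟩ : {v : V // v ≠ v0}) = j), if_pos h2]
      · rw [if_neg (fun h => h2 (congrArg Subtype.val h)), if_neg h2]

lemma sum_subtype_ne {M : Type*} [AddCommMonoid M] (v0 : V) (f : V → M) :
    f v0 + ∑ v : {v : V // v ≠ v0}, f ↑v = ∑ v, f v := by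
  rw [← Finset.sum_subtype (Finset.univ.erase v0) (fun x => by simp) f]
  exact Finset.add_sum_erase _ f (Finset.mem_univ v0)

lemma card_subtype_ne (v0 : V) :
    Fintype.card {v : V // v ≠ v0} = Fintype.card V - 1 := by
  have h := Fintype.card_subtype_compl (fun v : V => v = v0)
  rw [Fintype.card_subtype_eq] at h
  convert h using 2

end EdgeRank

namespace EdgeRank

lemma ker_le_span : ∀ (n : ℕ) (V : Type u) [Fintype V] [DecidableEq V]
    (p : V → ℝ × ℝ), Fintype.card V = n → GeneralPosition p →
    LinearMap.ker (Phi p) ≤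
      Submodule.span ℝ {x | ∃ i j : V, i ≠ j ∧ x = edgeVec p i j} := by
  intro n
  induction n using Nat.strong_induction_on with
  | _ n ih =>
  intro V _ _ p hcard hp f hf
  have h0 : Phi p f = 0 := LinearMap.mem_ker.mp hf
  have hsum : ∑ w, f w = 0 := congrArg Prod.fst h0
  have hmom : ∑ w, dd (p w) (f w) = 0 := congrArg Prod.snd h0
  rcases lt_or_ge n 2 with hn | hn
  · -- n ≤ 1 : f = 0
    have hf0 : f = 0 := by
      funext v
      haveI : Subsingleton V := Fintype.card_le_one_iff_subsingleton.mp (by omega)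
      rw [Finset.sum_eq_single v (fun w _ hw => absurd (Subsingleton.elim w v) hw)
        (fun h => absurd (Finset.mem_univ v) h)] at hsum
      exact hsum
    rw [hf0]; exact Submodule.zero_mem _
  rcases eq_or_lt_of_le hn with h2 | h3
  · -- n = 2
    obtain ⟨x, y, hxy⟩ := Fintype.exists_pair_of_one_lt_card
      (by omega : 1 < Fintype.card V)
    have hxyuniv : (Finset.univ : Finset V) = {x, y} :=
      (Finset.eq_univ_of_card {x, y} (by rw [Finset.card_pair hxy]; omega)).symm
    rw [hxyuniv, Finset.sum_pair hxy] at hsum hmom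
    have hfy : f y = - f x := eq_neg_of_add_eq_zero_right hsum
    have hdd : dd (p x - p y) (f x) = 0 := by
      rw [hfy] at hmom
      simp only [dd] at hmom ⊢
      simp only [Prod.fst_neg, Prod.snd_neg, Prod.fst_sub, Prod.snd_sub] at hmom ⊢
      linarith
    have hpxy : p x - p y ≠ 0 := sub_ne_zero.mpr (fun h => hxy (hp.1 h))
    obtain ⟨c, hc⟩ := exists_smul_of_dd_eq_zero hpxy hdd
    have hfeq : f = c • edgeVec p x y := by
      funext v
      have hv : v = x ∨ v = y := by
        have hm := Finset.mem_univ v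
        rw [hxyuniv] at hm
        simpa using hm
      rcases hv with rfl | rfl
      · rw [Pi.smul_apply, edgeVec, if_pos rfl]; exact hc
      · rw [Pi.smul_apply, edgeVec, if_neg (Ne.symm hxy), if_pos rfl, hfy, hc]
        rw [smul_sub, smul_sub]; abel
    rw [hfeq]
    exact Submodule.smul_mem _ c (Submodule.subset_span ⟨x, y, hxy, rfl⟩)
  · -- n ≥ 3
    have hpos : 0 < Fintype.card V := by omega
    obtain ⟨v0⟩ := Fintype.card_pos_iff.mp hpos
    set p' : {v : V // v ≠ v0} → ℝ × ℝ := fun v => p ↑v with hp'def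
    have hcard' : Fintype.card {v : V // v ≠ v0} = n - 1 := by
      rw [card_subtype_ne, hcard]
    have hp' : GeneralPosition p' := by
      constructor
      · exact fun a b hab => Subtype.ext (hp.1 hab)
      · intro i j k hij hjk hik
        exact hp.2 ↑i ↑j ↑k (fun h => hij (Subtype.ext h))
          (fun h => hjk (Subtype.ext h)) (fun h => hik (Subtype.ext h))
    obtain ⟨j, k, hjk⟩ :=
      Fintype.exists_pair_of_one_lt_card (by omega : 1 < Fintype.card {v : V // v ≠ v0})
    have hnc := hp.2 v0 ↑j ↑k (Ne.symm j.2) (fun h => hjk (Subtype.ext h)) (Ne.symm k.2)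
    have hd : dd (p ↑j - p v0) (p ↑k - p v0) ≠ 0 := dd_ne_of_not_collinear hnc
    have hd' : dd (p v0 - p ↑j) (p v0 - p ↑k) ≠ 0 := by
      rw [show p v0 - p ↑j = -(p ↑j - p v0) by abel,
        show p v0 - p ↑k = -(p ↑k - p v0) by abel, dd_neg_neg]
      exact hd
    obtain ⟨a, b, hab⟩ := cramer hd' (f v0)
    set g : V → ℝ × ℝ := f - a • edgeVec p v0 ↑j - b • edgeVec p v0 ↑k with hg
    have hgker : Phi p g = 0 := by
      rw [hg, map_sub, map_sub, map_smul, map_smul, h0,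
        Phi_edgeVec p (Ne.symm j.2), Phi_edgeVec p (Ne.symm k.2)]
      simp
    have hgv0 : g v0 = 0 := by
      rw [hg]
      simp only [Pi.sub_apply, Pi.smul_apply, edgeVec, if_pos rfl]
      rw [sub_sub, sub_eq_zero]; exact hab
    set g' : {v : V // v ≠ v0} → ℝ × ℝ := fun v => g ↑v with hg'def
    have hg'ker : g' ∈ LinearMap.ker (Phi p') := by
      apply LinearMap.mem_ker.mpr
      have hs : ∑ w, g w = 0 := congrArg Prod.fst hgker
      have hm : ∑ w, dd (p w) (g w) = 0 := congrArg Prod.snd hgker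
      have e1 := sum_subtype_ne v0 g
      have e2 := sum_subtype_ne v0 (fun v => dd (p v) (g v))
      rw [hgv0, zero_add, hs] at e1
      rw [hgv0, dd_zero_right, zero_add, hm] at e2
      apply Prod.ext
      · exact e1
      · exact e2
    have hmem' : g' ∈ Submodule.span ℝ
        {x | ∃ i j : {v : V // v ≠ v0}, i ≠ j ∧ x = edgeVec p' i j} :=
      ih (n - 1) (by omega) {v : V // v ≠ v0} p' hcard' hp' hg'ker
    have hExt : extMap v0 g' = g := by
      funext v
      by_cases hv : v = v0
      · subst hv
        simp only [extMap, LinearMap.coe_mk, AddHom.coe_mk, dif_pos rfl]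
        exact hgv0.symm
      · simp only [extMap, LinearMap.coe_mk, AddHom.coe_mk, dif_neg hv]; rfl
    have hmem : g ∈ Submodule.span ℝ {x | ∃ i j : V, i ≠ j ∧ x = edgeVec p i j} := by
      rw [← hExt]
      have h1 : extMap v0 g' ∈ Submodule.map (extMap v0) (Submodule.span ℝ
          {x | ∃ i j : {v : V // v ≠ v0}, i ≠ j ∧ x = edgeVec p' i j}) :=
        Submodule.mem_map_of_mem hmem'
      refine Submodule.map_le_iff_le_comap.mpr ?_ h1
      rw [Submodule.span_le]
      rintro x ⟨i, j, hij, rfl⟩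
      apply Submodule.mem_comap.mpr
      rw [extMap_edgeVec v0 p i j]
      exact Submodule.subset_span ⟨↑i, ↑j, fun h => hij (Subtype.ext h), rfl⟩
    have hfg : f = g + a • edgeVec p v0 ↑j + b • edgeVec p v0 ↑k := by
      rw [hg]; abel
    rw [hfg]
    exact Submodule.add_mem _
      (Submodule.add_mem _ hmem
        (Submodule.smul_mem _ _ (Submodule.subset_span ⟨v0, ↑j, Ne.symm j.2, rfl⟩)))
      (Submodule.smul_mem _ _ (Submodule.subset_span ⟨v0, ↑k, Ne.symm k.2, rfl⟩))

end EdgeRank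

namespace EdgeRank

variable {V : Type*} [Fintype V] [DecidableEq V]

lemma Phi_surjective (p : V → ℝ × ℝ) (hinj : Function.Injective p)
    (h2 : 2 ≤ Fintype.card V) : Function.Surjective (Phi p) := by
  obtain ⟨v, w, hvw⟩ := Fintype.exists_pair_of_one_lt_card
    (by omega : 1 < Fintype.card V)
  rintro ⟨s, m⟩
  set u : ℝ × ℝ := p v - p w with hu_def
  have hu : u ≠ 0 := sub_ne_zero.mpr (fun h => hvw (hinj h))
  have hq : u.1 ^ 2 + u.2 ^ 2 ≠ 0 := by
    intro h0
    apply hu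
    have e1 : u.1 = 0 := by nlinarith [sq_nonneg u.1, sq_nonneg u.2]
    have e2 : u.2 = 0 := by nlinarith [sq_nonneg u.1, sq_nonneg u.2]
    apply Prod.ext <;> simp [e1, e2]
  set c : ℝ := m - dd (p w) s with hc_def
  set a : ℝ × ℝ := (c / (u.1 ^ 2 + u.2 ^ 2)) • (-u.2, u.1) with ha_def
  refine ⟨Pi.single v a + Pi.single w (s - a), ?_⟩
  rw [map_add, Phi_single, Phi_single]
  have h1 : dd u a = c := by
    rw [ha_def]
    simp only [dd, Prod.smul_fst, Prod.smul_snd, smul_eq_mul]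
    field_simp
    ring
  apply Prod.ext
  · show a + (s - a) = s
    abel
  · show dd (p v) a + dd (p w) (s - a) = m
    have h2' : dd (p v) a - dd (p w) a = dd u a := by
      rw [hu_def]; simp only [dd, Prod.fst_sub, Prod.snd_sub]; ring
    have h3 : dd (p w) (s - a) = dd (p w) s - dd (p w) a := by
      simp only [dd, Prod.fst_sub, Prod.snd_sub]; ring
    rw [h3]
    rw [h1] at h2'
    rw [hc_def] at h2'
    linarith

end EdgeRank

open EdgeRank in
/-- If `|V| ≥ 2` and `p` is in general position, then the span of the edge vectors of the
complete graph on `V` has dimension `2 |V| - 3`. -/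
theorem finrank_span_completeGraph {V : Type*} [Fintype V] (p : V → ℝ × ℝ)
    (hp : GeneralPosition p) (h2 : 2 ≤ Fintype.card V) :
    Module.finrank ℝ (Submodule.span ℝ {x | ∃ i j : V, i ≠ j ∧ x = edgeVec p i j})
      = 2 * Fintype.card V - 3 := by
  classical
  have hspan : Submodule.span ℝ {x | ∃ i j : V, i ≠ j ∧ x = edgeVec p i j}
      = LinearMap.ker (Phi p) := by
    apply le_antisymm
    · rw [Submodule.span_le]
      rintro x ⟨i, j, hij, rfl⟩
      exact LinearMap.mem_ker.mpr (Phi_edgeVec p hij)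
    · exact ker_le_span (Fintype.card V) V p rfl hp
  rw [hspan]
  have hrange : LinearMap.range (Phi p) = ⊤ :=
    LinearMap.range_eq_top.mpr (Phi_surjective p hp.1 h2)
  have h1 := LinearMap.finrank_range_add_finrank_ker (Phi p)
  rw [hrange, finrank_top] at h1
  have hdom : Module.finrank ℝ (V → ℝ × ℝ) = 2 * Fintype.card V := by
    rw [Module.finrank_pi_fintype]
    simp [mul_comm]
  have hcod : Module.finrank ℝ ((ℝ × ℝ) × ℝ) = 3 := by
    simp
  rw [hdom, hcod] at h1
  omega
end

section
/- Let V be a finite set, p : V → ℝ² a map in general position, and U ⊆ V a subset with |U| ≥ 2. Then span{v_{ij}(p) : i,j ∈ V, i ≠ j} + W_U is the whole space of functions V → ℝ², where the span is over all edge vectors of the complete graph on V and W_U is the subspace of functions V → ℝ² vanishing at every vertex of V \ U. -/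
lemma indep_of_not_collinear (x y z : ℝ × ℝ)
    (h : ¬ Collinear ℝ ({x, y, z} : Set (ℝ × ℝ))) :
    LinearIndependent ℝ ![x - y, x - z] := by
  rw [LinearIndependent.pair_iff]
  intro s t hst
  by_contra hc
  push_neg at hc
  apply h
  by_cases hs : s = 0
  · have ht : t ≠ 0 := hc hs
    subst hs
    have h0 : t • (x - z) = 0 := by simpa using hst
    have hxz : z = x := by
      rcases smul_eq_zero.mp h0 with h1 | h1
      · exact absurd h1 ht
      · exact (sub_eq_zero.mp h1).symm
    subst hxz
    have hset : ({z, y, z} : Set (ℝ × ℝ)) = {y, z} := by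
      ext w; constructor
      · rintro (rfl | rfl | rfl) <;> simp
      · rintro (rfl | rfl) <;> simp
    rw [hset]
    exact collinear_pair ℝ y z
  · rw [collinear_iff_of_mem (Set.mem_insert x _)]
    refine ⟨x - z, ?_⟩
    intro q hq
    simp only [Set.mem_insert_iff, Set.mem_singleton_iff] at hq
    rcases hq with rfl | rfl | rfl
    · exact ⟨0, by simp⟩
    · refine ⟨t / s, smul_right_injective (ℝ × ℝ) hs ?_⟩
      show s • q = s • ((t / s) • (x - z) + x)
      have hts : s * (t / s) = t := by field_simp
      rw [smul_add, smul_smul, hts]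
      linear_combination (norm := module) (-1 : ℝ) • hst
    · refine ⟨-1, ?_⟩
      simp only [vadd_eq_add]
      module

/-- If `p` is in general position and `U ⊆ V` has `|U| ≥ 2`, then
`span{v_ij(p) : i ≠ j in V} + W_U` is the whole space of functions `V → ℝ × ℝ`. -/
theorem span_completeGraph_sup_vanishOn {V : Type*} [Fintype V] (p : V → ℝ × ℝ)
    (hp : GeneralPosition p) (U : Set V) (hU : 2 ≤ U.ncard) :
    Submodule.span ℝ {x | ∃ i j : V, i ≠ j ∧ x = edgeVec p i j} ⊔ vanishOn U = ⊤ := by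
  classical
  set S := Submodule.span ℝ {x | ∃ i j : V, i ≠ j ∧ x = edgeVec p i j} ⊔ vanishOn U with hSdef
  obtain ⟨a, b, haU, hbU, hab⟩ : ∃ a b, a ∈ U ∧ b ∈ U ∧ a ≠ b :=
    (Set.one_lt_ncard_iff U.toFinite).mp hU
  have hsingle : ∀ (v : V) (c : ℝ × ℝ), Pi.single v c ∈ S := by
    intro v c
    by_cases hv : v ∈ U
    · refine Submodule.mem_sup_right (show ∀ u ∉ U, Pi.single (M := fun _ : V => ℝ × ℝ) v c u = 0 from ?_)
      intro u hu
      have huv : u ≠ v := by rintro rfl; exact hu hv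
      exact Pi.single_eq_of_ne (M := fun _ : V => ℝ × ℝ) huv c
    · have hva : v ≠ a := fun h => hv (h ▸ haU)
      have hvb : v ≠ b := fun h => hv (h ▸ hbU)
      have hdecomp : ∀ w : V, v ≠ w →
          edgeVec p v w = Pi.single v (p v - p w) + Pi.single w (p w - p v) := by
        intro w hw
        funext u
        by_cases h1 : u = v
        · subst h1
          simp [edgeVec, Pi.single_apply, hw, Ne.symm hw]
        · by_cases h2 : u = w
          · subst h2
            simp [edgeVec, Pi.single_apply, h1, Ne.symm hw]
          · simp [edgeVec, Pi.single_apply, h1, h2, Ne.symm h1, Ne.symm h2]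
      have key : ∀ w ∈ U, v ≠ w → Pi.single v (p v - p w) ∈ S := by
        intro w hw hvw
        have h1 : edgeVec p v w ∈ S :=
          Submodule.mem_sup_left (Submodule.subset_span ⟨v, w, hvw, rfl⟩)
        have h2 : Pi.single w (p w - p v) ∈ S := by
          refine Submodule.mem_sup_right
            (show ∀ u ∉ U, Pi.single (M := fun _ : V => ℝ × ℝ) w (p w - p v) u = 0 from ?_)
          intro u hu
          have huw : u ≠ w := by rintro rfl; exact hu hw
          exact Pi.single_eq_of_ne (M := fun _ : V => ℝ × ℝ) huw _
        have h3 := Submodule.sub_mem _ h1 h2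
        rwa [hdecomp w hvw, add_sub_cancel_right] at h3
      have hind : LinearIndependent ℝ ![p v - p a, p v - p b] :=
        indep_of_not_collinear _ _ _ (hp.2 v a b hva hab hvb)
      have hsp : Submodule.span ℝ (Set.range ![p v - p a, p v - p b]) = ⊤ :=
        hind.span_eq_top_of_card_eq_finrank (by simp)
      set T : Submodule ℝ (ℝ × ℝ) :=
        S.comap (LinearMap.single ℝ (fun _ : V => ℝ × ℝ) v) with hTdef
      have hle : Submodule.span ℝ (Set.range ![p v - p a, p v - p b]) ≤ T := by
        rw [Submodule.span_le]
        rintro x ⟨i, rfl⟩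
        fin_cases i
        · exact key a haU hva
        · exact key b hbU hvb
      exact hle (hsp ▸ Submodule.mem_top)
  have hf : ∀ f : V → ℝ × ℝ, f ∈ S := by
    intro f
    have hsum : ∑ i, Pi.single i (f i) = f := Finset.univ_sum_single f
    rw [← hsum]
    exact Submodule.sum_mem _ fun v _ => hsingle v (f v)
  rw [eq_top_iff]
  exact fun f _ => hf f
end
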